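/- arXiv:1905.12018 — 7 statements merged into one kernel-verified Lean document; each statement's English description precedes it below -/
import Mathlib

section
/- If G is a finite group with a proper normal subgroup N such that gcd(|N|, [G:N]) = 1 and G/N ≅ Q_{20} (the quaternion group of order 20) with N ≅ C_3, and G also has a quotient isomorphic to Q_{12}, then G ≅ Q_{60}. -/
set_option maxRecDepth 10000

open QuaternionGroup Multiplicative

abbrev M4 := Multiplicative (ZMod 4)

private def chiF {n : ℕ} : QuaternionGroup n → M4
  | .a i => Multiplicative.ofAdd (2 * (i.val : ZMod 4))
  | .xa i => Multiplicative.ofAdd (2 * (i.val : ZMod 4) + 1)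

private def chi12 : QuaternionGroup 3 →* M4 := MonoidHom.mk' chiF (by decide)
private def chi20 : QuaternionGroup 5 →* M4 := MonoidHom.mk' chiF (by decide)

private lemma chi12_surj : Function.Surjective chi12 := by decide
private lemma chi20_surj : Function.Surjective chi20 := by decide

private def qmF {n m : ℕ} : QuaternionGroup n → QuaternionGroup m
  | .a i => .a (i.val : ZMod (2*m))
  | .xa i => .xa (i.val : ZMod (2*m))

private def qm3 : QuaternionGroup 15 →* QuaternionGroup 3 := MonoidHom.mk' qmF (by decide)
private def qm5 : QuaternionGroup 15 →* QuaternionGroup 5 := MonoidHom.mk' qmF (by decide)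

private def betaF : QuaternionGroup 5 → QuaternionGroup 5
  | .a i => .a i
  | .xa i => .xa (i + 1)

private def beta : QuaternionGroup 5 →* QuaternionGroup 5 := MonoidHom.mk' betaF (by decide)

private lemma m4_pow15 : ∀ m : M4, m ^ 15 = 1 → m = 1 := by decide

private lemma m4_gen : ∀ c : M4, (∃ k : Fin 4, ofAdd (1 : ZMod 4) = c ^ (k : ℕ)) →
    c = ofAdd (1 : ZMod 4) ∨ c = ofAdd (3 : ZMod 4) := by decide

private lemma m4_pow_val1 : ∀ m : M4, (ofAdd (1 : ZMod 4)) ^ m.toAdd.val = m := by decide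
private lemma m4_pow_val3 : ∀ m : M4, (ofAdd (3 : ZMod 4)) ^ m.toAdd.val = m⁻¹ := by decide

private lemma dinj1 : ∀ x : QuaternionGroup 15,
    (qmF x : QuaternionGroup 3) = 1 → (qmF x : QuaternionGroup 5) = 1 → x = 1 := by decide

private lemma dinj2 : ∀ x : QuaternionGroup 15,
    (qmF x : QuaternionGroup 3) = 1 → betaF (qmF x : QuaternionGroup 5) = 1 → x = 1 := by decide

private lemma dcomp1 : ∀ x : QuaternionGroup 15,
    chiF (qmF x : QuaternionGroup 5) = chiF (qmF x : QuaternionGroup 3) := by decide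

private lemma dcomp2 : ∀ x : QuaternionGroup 15,
    chiF (betaF (qmF x : QuaternionGroup 5)) = (chiF (qmF x : QuaternionGroup 3))⁻¹ := by decide

private lemma card_M4 : Nat.card M4 = 4 := by
  rw [Nat.card_congr Multiplicative.toAdd, Nat.card_zmod]

private lemma cardQ : ∀ (n : ℕ) [NeZero n], Nat.card (QuaternionGroup n) = 4 * n := by
  intro n _
  rw [Nat.card_eq_fintype_card, QuaternionGroup.card]

private lemma card_ker_of_surj {G H : Type*} [Group G] [Group H] [Finite G] [Finite H]
    (f : G →* H) (hf : Function.Surjective f) :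
    Nat.card f.ker * Nat.card H = Nat.card G := by
  rw [← f.ker.card_mul_index, Subgroup.index_ker, MonoidHom.range_eq_top.2 hf,
    Subgroup.card_top]

private lemma endgame {G : Type*} [Group G] [Finite G]
    (φ : G →* QuaternionGroup 3 × QuaternionGroup 5)
    (ψ : QuaternionGroup 15 →* QuaternionGroup 3 × QuaternionGroup 5)
    (K : Subgroup (QuaternionGroup 3 × QuaternionGroup 5))
    (hφ : Function.Injective φ) (hψ : Function.Injective ψ)
    (hG : Nat.card G = 60) (hK : Nat.card K = 60)
    (h1 : φ.range ≤ K) (h2 : ψ.range ≤ K) :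
    Nonempty (G ≃* QuaternionGroup 15) := by
  have hQ60 : Nat.card (QuaternionGroup 15) = 60 := cardQ 15
  have hrφ : Nat.card φ.range = 60 := by
    rw [← Nat.card_congr (MonoidHom.ofInjective hφ).toEquiv, hG]
  have hrψ : Nat.card ψ.range = 60 := by
    rw [← Nat.card_congr (MonoidHom.ofInjective hψ).toEquiv, hQ60]
  have e1 : φ.range = K := Subgroup.eq_of_le_of_card_ge h1 (by rw [hrφ, hK])
  have e2 : ψ.range = K := Subgroup.eq_of_le_of_card_ge h2 (by rw [hrψ, hK])
  exact ⟨(MonoidHom.ofInjective hφ).trans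
    (((MulEquiv.subgroupCongr (e1.trans e2.symm))).trans (MonoidHom.ofInjective hψ).symm)⟩

/-- If `G` is a finite group with a proper normal subgroup `N` such that
`gcd(|N|, [G:N]) = 1`, `G/N ≅ Q_20` (= `QuaternionGroup 5`), `N ≅ C_3`, and `G` also has a
quotient isomorphic to `Q_12` (= `QuaternionGroup 3`), then `G ≅ Q_60` (= `QuaternionGroup 15`). -/
theorem stmt_3 (G : Type*) [Group G] [Finite G] (N : Subgroup G) [N.Normal]
    (hprop : N ≠ ⊤)
    (hcop : Nat.Coprime (Nat.card N) N.index)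
    (hQ20 : Nonempty ((G ⧸ N) ≃* QuaternionGroup 5))
    (hC3 : Nonempty (N ≃* Multiplicative (ZMod 3)))
    (hQ12 : ∃ f : G →* QuaternionGroup 3, Function.Surjective f) :
    Nonempty (G ≃* QuaternionGroup 15) := by
  obtain ⟨e20⟩ := hQ20
  obtain ⟨e3⟩ := hC3
  obtain ⟨f, hf⟩ := hQ12
  -- cardinalities
  have hN3 : Nat.card N = 3 := by
    rw [Nat.card_congr e3.toEquiv, Nat.card_congr Multiplicative.toAdd, Nat.card_zmod]
  have hidx : N.index = 20 := by
    rw [Subgroup.index_eq_card, Nat.card_congr e20.toEquiv, cardQ 5]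
  have hG60 : Nat.card G = 60 := by
    rw [← N.card_mul_index, hN3, hidx]
  -- the projection onto Q20
  set π : G →* QuaternionGroup 5 := e20.toMonoidHom.comp (QuotientGroup.mk' N) with hπ
  have hπs : Function.Surjective π := e20.surjective.comp (QuotientGroup.mk'_surjective N)
  have hπker : π.ker = N := by
    ext g
    simp only [hπ, MonoidHom.mem_ker, MonoidHom.comp_apply, MulEquiv.coe_toMonoidHom,
      MulEquiv.map_eq_one_iff, QuotientGroup.mk'_apply]
    exact QuotientGroup.eq_one_iff g
  -- φ injective
  set φ : G →* QuaternionGroup 3 × QuaternionGroup 5 := f.prod π with hφdef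
  have hkf : Nat.card f.ker = 5 := by
    have := card_ker_of_surj f hf
    rw [hG60, cardQ 3] at this
    omega
  have hφinj : Function.Injective φ := by
    rw [← MonoidHom.ker_eq_bot_iff, ← Subgroup.card_eq_one]
    have hle1 := Subgroup.card_dvd_of_le
      (show φ.ker ≤ f.ker by rw [hφdef, MonoidHom.ker_prod]; exact inf_le_left)
    have hle2 := Subgroup.card_dvd_of_le
      (show φ.ker ≤ π.ker by rw [hφdef, MonoidHom.ker_prod]; exact inf_le_right)
    rw [hkf] at hle1
    rw [hπker, hN3] at hle2
    have := Nat.dvd_gcd hle1 hle2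
    simpa using this
  -- the two characters
  set F1 : G →* M4 := chi12.comp f with hF1
  set F2 : G →* M4 := chi20.comp π with hF2
  have hF1s : Function.Surjective F1 := chi12_surj.comp hf
  have hF2s : Function.Surjective F2 := chi20_surj.comp hπs
  have key : ∀ (F : G →* M4), Function.Surjective F → ∀ g, (F g = 1 ↔ g ^ 15 = 1) := by
    intro F hFs g
    have hcard : Nat.card F.ker = 15 := by
      have := card_ker_of_surj F hFs
      rw [hG60, card_M4] at this
      omega
    constructor
    · intro hg
      have : (⟨g, hg⟩ : F.ker) ^ 15 = 1 := by
        rw [← hcard]; exact pow_card_eq_one'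
      simpa using congrArg Subtype.val this
    · intro hg
      apply m4_pow15
      rw [← map_pow, hg, map_one]
  have hkk : ∀ g, F2 g = 1 ↔ F1 g = 1 := fun g => (key F2 hF2s g).trans (key F1 hF1s g).symm
  -- determine F2 from F1
  obtain ⟨g0, hg0⟩ := hF1s (ofAdd (1 : ZMod 4))
  set c : M4 := F2 g0 with hc
  have claimA : ∀ g, F2 g = c ^ (F1 g).toAdd.val := by
    intro g
    have hpow : F1 (g0 ^ (F1 g).toAdd.val) = F1 g := by
      rw [map_pow, hg0]; exact m4_pow_val1 _
    have h1 : F1 (g * (g0 ^ (F1 g).toAdd.val)⁻¹) = 1 := by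
      rw [map_mul, map_inv, hpow, mul_inv_cancel]
    have h2 : F2 (g * (g0 ^ (F1 g).toAdd.val)⁻¹) = 1 := (hkk _).2 h1
    rw [map_mul, map_inv, mul_inv_eq_one] at h2
    rw [hc, ← map_pow]
    exact h2
  have hcgen : c = ofAdd (1 : ZMod 4) ∨ c = ofAdd (3 : ZMod 4) := by
    apply m4_gen
    obtain ⟨g1, hg1⟩ := hF2s (ofAdd (1 : ZMod 4))
    exact ⟨⟨(F1 g1).toAdd.val, ZMod.val_lt _⟩, by rw [← hg1, claimA g1]⟩
  rcases hcgen with hc1 | hc3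
  · -- F2 = F1 on all of G
    have hFF : ∀ g, F2 g = F1 g := by
      intro g; rw [claimA g, hc1, m4_pow_val1]
    set δ : QuaternionGroup 3 × QuaternionGroup 5 →* M4 :=
      (chi20.comp (MonoidHom.snd _ _)) * (chi12.comp (MonoidHom.fst _ _))⁻¹ with hδ
    have hδapp : ∀ p : QuaternionGroup 3 × QuaternionGroup 5,
        δ p = chi20 p.2 * (chi12 p.1)⁻¹ := fun p => rfl
    have hδs : Function.Surjective δ := by
      intro m
      obtain ⟨v, hv⟩ := chi20_surj m
      exact ⟨(1, v), by rw [hδapp]; simp [hv]⟩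
    have hδker : Nat.card δ.ker = 60 := by
      have := card_ker_of_surj δ hδs
      rw [card_M4, Nat.card_prod, cardQ 3, cardQ 5] at this
      omega
    set ψ : QuaternionGroup 15 →* QuaternionGroup 3 × QuaternionGroup 5 := qm3.prod qm5
    have hψinj : Function.Injective ψ := by
      rw [injective_iff_map_eq_one]
      intro x hx
      rw [MonoidHom.prod_apply, Prod.ext_iff] at hx
      exact dinj1 x hx.1 hx.2
    apply endgame φ ψ δ.ker hφinj hψinj hG60 hδker
    · rintro p ⟨g, rfl⟩
      have : δ (φ g) = F2 g * (F1 g)⁻¹ := rfl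
      rw [MonoidHom.mem_ker, this, hFF, mul_inv_cancel]
    · rintro p ⟨x, rfl⟩
      have : δ (ψ x) = chi20 (qm5 x) * (chi12 (qm3 x))⁻¹ := rfl
      rw [MonoidHom.mem_ker, this]
      have h := dcomp1 x
      have e1 : chi20 (qm5 x) = chiF (qmF x : QuaternionGroup 5) := rfl
      have e2 : chi12 (qm3 x) = chiF (qmF x : QuaternionGroup 3) := rfl
      rw [e1, e2, h, mul_inv_cancel]
  · -- F2 = F1⁻¹ on all of G
    have hFF : ∀ g, F2 g = (F1 g)⁻¹ := by
      intro g; rw [claimA g, hc3, m4_pow_val3]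
    set δ : QuaternionGroup 3 × QuaternionGroup 5 →* M4 :=
      (chi20.comp (MonoidHom.snd _ _)) * (chi12.comp (MonoidHom.fst _ _)) with hδ
    have hδapp : ∀ p : QuaternionGroup 3 × QuaternionGroup 5,
        δ p = chi20 p.2 * chi12 p.1 := fun p => rfl
    have hδs : Function.Surjective δ := by
      intro m
      obtain ⟨v, hv⟩ := chi20_surj m
      exact ⟨(1, v), by rw [hδapp]; simp [hv]⟩
    have hδker : Nat.card δ.ker = 60 := by
      have := card_ker_of_surj δ hδs
      rw [card_M4, Nat.card_prod, cardQ 3, cardQ 5] at this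
      omega
    set ψ : QuaternionGroup 15 →* QuaternionGroup 3 × QuaternionGroup 5 :=
      qm3.prod (beta.comp qm5)
    have hψinj : Function.Injective ψ := by
      rw [injective_iff_map_eq_one]
      intro x hx
      rw [MonoidHom.prod_apply, Prod.ext_iff] at hx
      exact dinj2 x hx.1 hx.2
    apply endgame φ ψ δ.ker hφinj hψinj hG60 hδker
    · rintro p ⟨g, rfl⟩
      have : δ (φ g) = F2 g * F1 g := rfl
      rw [MonoidHom.mem_ker, this, hFF, inv_mul_cancel]
    · rintro p ⟨x, rfl⟩
      have : δ (ψ x) = chi20 (beta (qm5 x)) * chi12 (qm3 x) := rfl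
      rw [MonoidHom.mem_ker, this]
      have h := dcomp2 x
      have e1 : chi20 (beta (qm5 x)) = chiF (betaF (qmF x : QuaternionGroup 5)) := rfl
      have e2 : chi12 (qm3 x) = chiF (qmF x : QuaternionGroup 3) := rfl
      rw [e1, e2, h, inv_mul_cancel]
end

section
/- If G is a finite group whose Sylow p-subgroups are cyclic for all odd primes p and whose Sylow 2-subgroup is cyclic or generalized quaternion, then G has no subgroup isomorphic to C_p × C_p for any prime p. -/
lemma quat_sq {n : ℕ} [NeZero n] (g : QuaternionGroup n) (h2 : g ^ 2 = 1) (h1 : g ≠ 1) :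
    g = QuaternionGroup.a (n : ZMod (2 * n)) := by
  have hnpos := NeZero.pos n
  cases g with
  | a i =>
    rw [sq, QuaternionGroup.a_mul_a, QuaternionGroup.one_def] at h2
    have hi : i + i = 0 := by injection h2
    have hv : (i.val + i.val) % (2 * n) = 0 := by
      have := congrArg ZMod.val hi
      rwa [ZMod.val_add, ZMod.val_zero] at this
    have hd : 2 * n ∣ 2 * i.val := by
      have := Nat.dvd_of_mod_eq_zero hv
      rwa [← two_mul] at this
    obtain ⟨k, hk⟩ := hd
    have hk' : i.val = n * k := by
      refine Nat.eq_of_mul_eq_mul_left two_pos ?_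
      rw [hk, mul_assoc]
    have hlt : i.val < 2 * n := ZMod.val_lt i
    have hne : i.val ≠ 0 := by
      intro h0
      exact h1 (by rw [(ZMod.val_eq_zero i).mp h0, ← QuaternionGroup.one_def])
    have hk2 : k < 2 := by nlinarith
    have hkval : i.val = n := by interval_cases k <;> omega
    congr 1
    have : ((i.val : ℕ) : ZMod (2 * n)) = i := by simp [ZMod.natCast_val, ZMod.cast_id]
    rw [← this, hkval]
  | xa i =>
    rw [QuaternionGroup.xa_sq, QuaternionGroup.one_def] at h2
    have h0 : (n : ZMod (2 * n)) = 0 := by injection h2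
    rw [ZMod.natCast_eq_zero_iff] at h0
    have := Nat.le_of_dvd hnpos h0
    omega


private lemma klein_sq : ∀ g : Multiplicative (ZMod 2) × Multiplicative (ZMod 2), g ^ 2 = 1 := by
  decide

private lemma klein_ne1 : ((Multiplicative.ofAdd (1 : ZMod 2), 1) :
    Multiplicative (ZMod 2) × Multiplicative (ZMod 2)) ≠ 1 := by decide

private lemma klein_ne2 : ((1, Multiplicative.ofAdd (1 : ZMod 2)) :
    Multiplicative (ZMod 2) × Multiplicative (ZMod 2)) ≠ 1 := by decide

private lemma klein_ne12 : ((Multiplicative.ofAdd (1 : ZMod 2), 1) :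
    Multiplicative (ZMod 2) × Multiplicative (ZMod 2)) ≠
    (1, Multiplicative.ofAdd (1 : ZMod 2)) := by decide

/-- If `G` is a finite group whose Sylow `p`-subgroups are cyclic for all odd primes `p`,
and whose Sylow 2-subgroups are cyclic or generalized quaternion, then `G` has no subgroup
isomorphic to `C_p × C_p` for any prime `p`. -/
theorem stmt_6 (G : Type*) [Group G] [Finite G]
    (hodd : ∀ p : ℕ, p.Prime → Odd p → ∀ P : Sylow p G, IsCyclic P)
    (h2 : ∀ P : Sylow 2 G, IsCyclic P ∨
      ∃ n : ℕ, 3 ≤ n ∧ Nonempty ((P : Subgroup G) ≃* QuaternionGroup (2 ^ (n - 2)))) :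
    ∀ p : ℕ, p.Prime → ∀ H : Subgroup G,
      ¬ Nonempty (H ≃* Multiplicative (ZMod p) × Multiplicative (ZMod p)) := by
  rintro p hp H ⟨e⟩
  haveI : Fact p.Prime := ⟨hp⟩
  have hcardK : Nat.card (Multiplicative (ZMod p) × Multiplicative (ZMod p)) = p ^ 2 := by
    simp [Nat.card_prod, Nat.card_zmod, sq]
  have hcardH : Nat.card H = p ^ 2 := by rw [Nat.card_congr e.toEquiv, hcardK]
  obtain ⟨P, hle⟩ := (IsPGroup.of_card hcardH).exists_le_sylow
  have hx : ∀ x : Multiplicative (ZMod p), x ^ p = 1 := fun x => by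
    have h : Multiplicative.toAdd (x ^ p) = Multiplicative.toAdd (1 : Multiplicative (ZMod p)) := by
      rw [toAdd_pow, toAdd_one, nsmul_eq_mul, ZMod.natCast_self, zero_mul]
    exact Multiplicative.toAdd.injective h
  have hnotcyc : ¬ IsCyclic (Multiplicative (ZMod p) × Multiplicative (ZMod p)) := by
    intro hc
    have hexp := IsCyclic.exponent_eq_card (α := Multiplicative (ZMod p) × Multiplicative (ZMod p))
    have hdvd : Monoid.exponent (Multiplicative (ZMod p) × Multiplicative (ZMod p)) ∣ p := by
      apply Monoid.exponent_dvd_of_forall_pow_eq_one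
      intro g
      exact Prod.ext (by rw [Prod.pow_fst, hx]; rfl) (by rw [Prod.pow_snd, hx]; rfl)
    rw [hexp, hcardK] at hdvd
    have := Nat.le_of_dvd hp.pos hdvd
    nlinarith [hp.two_le]
  have hHcyc : ¬ IsCyclic H := fun hc => hnotcyc (isCyclic_of_surjective e e.surjective)
  have cyc_of_P : IsCyclic (P : Subgroup G) → False := by
    intro hc
    exact hHcyc (isCyclic_of_surjective (Subgroup.subgroupOfEquivOfLe hle)
      (Subgroup.subgroupOfEquivOfLe hle).surjective)
  rcases hp.eq_two_or_odd' with rfl | hoddp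
  · rcases h2 P with hc | ⟨n, hn3, ⟨f⟩⟩
    · exact cyc_of_P hc
    · haveI : NeZero (2 ^ (n - 2)) := ⟨pow_ne_zero _ two_ne_zero⟩
      set φ : Multiplicative (ZMod 2) × Multiplicative (ZMod 2) →* QuaternionGroup (2 ^ (n - 2)) :=
        f.toMonoidHom.comp ((Subgroup.inclusion hle).comp e.symm.toMonoidHom) with hφ
      have hinj : Function.Injective φ :=
        f.injective.comp ((Subgroup.inclusion_injective hle).comp e.symm.injective)
      have e1 : φ (Multiplicative.ofAdd (1 : ZMod 2), 1) = QuaternionGroup.a _ := quat_sq _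
        (by rw [← map_pow, klein_sq, map_one])
        (fun h => absurd (hinj (h.trans (map_one φ).symm)) klein_ne1)
      have e2 : φ (1, Multiplicative.ofAdd (1 : ZMod 2)) = QuaternionGroup.a _ := quat_sq _
        (by rw [← map_pow, klein_sq, map_one])
        (fun h => absurd (hinj (h.trans (map_one φ).symm)) klein_ne2)
      exact absurd (hinj (e1.trans e2.symm)) klein_ne12
  · exact cyc_of_P (hodd p hp hoddp P)
end

section
/- Let R be a ring, G a finite group, ε: Z[G] → Z the augmentation map, I = ker(ε) the augmentation ideal, and f: Z → (Z[G])^n an injective homomorphism of Z[G]-modules (with Z the trivial module) such that coker(f) is torsion-free as an abelian group. Then coker(f) is isomorphic to I* ⊕ (Z[G])^{n-1}, where I* = Hom_{Z[G]}(I, Z[G]). -/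
/-- The augmentation map `ℤ[G] → ℤ`. -/
noncomputable def augmentation (G : Type*) [Group G] :
    MonoidAlgebra ℤ G →ₐ[ℤ] ℤ :=
  MonoidAlgebra.lift ℤ ℤ G 1

/-- The augmentation ideal `I = ker(ε : ℤ[G] → ℤ)`. -/
noncomputable def augmentationIdeal (G : Type*) [Group G] :
    Ideal (MonoidAlgebra ℤ G) :=
  RingHom.ker (augmentation G).toRingHom

/-- The antipode `ℤ[G] → ℤ[G]ᵐᵒᵖ`, `g ↦ g⁻¹`. -/
noncomputable def antipode (G : Type*) [Group G] :
    MonoidAlgebra ℤ G →+* (MonoidAlgebra ℤ G)ᵐᵒᵖ :=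
  (MonoidAlgebra.lift ℤ ((MonoidAlgebra ℤ G)ᵐᵒᵖ) G
    { toFun := fun g => MulOpposite.op (MonoidAlgebra.of ℤ G g⁻¹)
      map_one' := by simp [MonoidAlgebra.one_def]
      map_mul' := fun g h => by
        show MulOpposite.op (MonoidAlgebra.of ℤ G (g * h)⁻¹) = _
        rw [mul_inv_rev, map_mul, MulOpposite.op_mul] }).toRingHom

/-- The `ℤ[G]`-dual `M* = Hom_{ℤ[G]}(M, ℤ[G])` of a `ℤ[G]`-module `M`. -/
def ZGDual (G : Type*) [Group G] (M : Type*) [AddCommGroup M]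
    [Module (MonoidAlgebra ℤ G) M] : Type _ :=
  M →ₗ[MonoidAlgebra ℤ G] MonoidAlgebra ℤ G

noncomputable instance (G : Type*) [Group G] (M : Type*) [AddCommGroup M]
    [Module (MonoidAlgebra ℤ G) M] : AddCommGroup (ZGDual G M) :=
  inferInstanceAs (AddCommGroup (M →ₗ[MonoidAlgebra ℤ G] MonoidAlgebra ℤ G))

/-- The left `ℤ[G]`-module structure on `M*`, induced via the antipode from the natural
right module structure. -/
noncomputable instance (G : Type*) [Group G] (M : Type*) [AddCommGroup M]
    [Module (MonoidAlgebra ℤ G) M] : Module (MonoidAlgebra ℤ G) (ZGDual G M) :=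
  Module.compHom (M →ₗ[MonoidAlgebra ℤ G] MonoidAlgebra ℤ G) (antipode G)

set_option linter.unusedSectionVars false

section Sp
variable {G : Type*} [Group G]

noncomputable def Sp (w : MonoidAlgebra ℤ G) : MonoidAlgebra ℤ G :=
  (antipode G w).unop

lemma single_eq_smul (h : G) (c : ℤ) :
    MonoidAlgebra.single h c = c • MonoidAlgebra.single h (1:ℤ) := by
  apply MonoidAlgebra.coeff_injective
  show Finsupp.single h c = c • Finsupp.single h (1:ℤ)
  rw [Finsupp.smul_single]; norm_num

lemma dual_smul_apply (M : Type*) [AddCommGroup M] [Module (MonoidAlgebra ℤ G) M]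
    (r : MonoidAlgebra ℤ G) (f : ZGDual G M) (x : M) :
    (show M →ₗ[MonoidAlgebra ℤ G] MonoidAlgebra ℤ G from r • f) x
      = (show M →ₗ[MonoidAlgebra ℤ G] MonoidAlgebra ℤ G from f) x * Sp r := rfl

lemma Sp_single (g : G) (c : ℤ) :
    Sp (MonoidAlgebra.single g c) = MonoidAlgebra.single g⁻¹ c := by
  show (antipode G (MonoidAlgebra.single g c)).unop = _
  rw [antipode]
  simp only [AlgHom.toRingHom_eq_coe, RingHom.coe_coe, MonoidAlgebra.lift_single]
  show ((c • MulOpposite.op (MonoidAlgebra.single g⁻¹ (1:ℤ)))).unop = _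
  rw [MulOpposite.unop_smul]
  exact (single_eq_smul g⁻¹ c).symm

lemma Sp_add (a b : MonoidAlgebra ℤ G) : Sp (a + b) = Sp a + Sp b := by
  show (antipode G (a+b)).unop = _
  rw [map_add]; rfl

lemma Sp_mul (a b : MonoidAlgebra ℤ G) : Sp (a * b) = Sp b * Sp a := by
  show (antipode G (a*b)).unop = _
  rw [map_mul]; rfl

lemma Sp_zsmul (c : ℤ) (a : MonoidAlgebra ℤ G) : Sp (c • a) = c • Sp a := by
  show (antipode G (c • a)).unop = _
  rw [map_zsmul]; rfl

lemma Sp_sum {α : Type*} (s : Finset α) (f : α → MonoidAlgebra ℤ G) :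
    Sp (∑ a ∈ s, f a) = ∑ a ∈ s, Sp (f a) := by
  show (antipode G _).unop = _
  rw [map_sum]
  exact map_sum (MulOpposite.opAddEquiv (α := MonoidAlgebra ℤ G)).symm.toAddMonoidHom _ s

end Sp

section FintypeG
variable {G : Type*} [Group G] [Fintype G]

noncomputable def nrm (G : Type*) [Group G] [Fintype G] : MonoidAlgebra ℤ G :=
  ∑ g : G, MonoidAlgebra.single g 1

lemma nrm_apply (x : G) : (nrm G).coeff x = 1 := by
  classical
  rw [nrm, MonoidAlgebra.coeff_sum, Finsupp.finset_sum_apply]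
  simp [MonoidAlgebra.coeff_single, Finsupp.single_apply]

lemma nrm_ne_zero : nrm G ≠ 0 := by
  intro h
  have := nrm_apply (G := G) 1
  rw [h] at this
  simp at this

lemma ma_smul_apply (c : ℤ) (x : MonoidAlgebra ℤ G) (g : G) : (c • x).coeff g = c * x.coeff g := rfl

lemma smul_nrm_inj {c d : ℤ} (h : c • nrm G = d • nrm G) : c = d := by
  have := congrArg (fun f : MonoidAlgebra ℤ G => f.coeff (1:G)) h
  rw [ma_smul_apply, ma_smul_apply, nrm_apply, mul_one, mul_one] at this
  exact this

lemma invariant_eq_smul_nrm (x : MonoidAlgebra ℤ G)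
    (hx : ∀ g : G, MonoidAlgebra.single g (1:ℤ) * x = x) : x = (x.coeff 1) • nrm G := by
  ext h
  have := congrArg (fun f : MonoidAlgebra ℤ G => f.coeff h) (hx h)
  rw [MonoidAlgebra.coeff_single_mul_apply] at this
  simp only [inv_mul_cancel, one_mul] at this
  rw [ma_smul_apply, nrm_apply, mul_one]
  exact this.symm

lemma single_mul_nrm (g : G) : MonoidAlgebra.single g (1:ℤ) * nrm G = nrm G := by
  classical
  show MonoidAlgebra.single g (1:ℤ) * (∑ h : G, MonoidAlgebra.single h 1) = _
  rw [Finset.mul_sum]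
  rw [show (∑ h : G, MonoidAlgebra.single g (1:ℤ) * MonoidAlgebra.single h 1)
      = ∑ h : G, MonoidAlgebra.single (g*h) (1:ℤ) by
    refine Finset.sum_congr rfl fun h _ => ?_
    rw [MonoidAlgebra.single_mul_single, one_mul]]
  exact Fintype.sum_equiv (Equiv.mulLeft g) _ _ (fun h => rfl)

lemma aug_single (g : G) (c : ℤ) : augmentation G (MonoidAlgebra.single g c) = c := by
  simp [augmentation, MonoidAlgebra.lift_single]

lemma ma_decomp (r : MonoidAlgebra ℤ G) : ∑ g : G, MonoidAlgebra.single g (r.coeff g) = r := by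
  classical
  ext h
  rw [MonoidAlgebra.coeff_sum, Finsupp.finset_sum_apply]
  simp [MonoidAlgebra.coeff_single, Finsupp.single_apply]

lemma aug_eq_sum (r : MonoidAlgebra ℤ G) : augmentation G r = ∑ g : G, r.coeff g := by
  conv_lhs => rw [← ma_decomp r]
  rw [map_sum]
  simp [aug_single]

lemma mul_nrm (r : MonoidAlgebra ℤ G) : r * nrm G = (augmentation G r) • nrm G := by
  conv_lhs => rw [← ma_decomp r]
  rw [Finset.sum_mul, aug_eq_sum]
  rw [show (∑ g : G, MonoidAlgebra.single g (r.coeff g) * nrm G) = ∑ g : G, (r.coeff g) • nrm G by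
    refine Finset.sum_congr rfl fun g _ => ?_
    rw [single_eq_smul, smul_mul_assoc, single_mul_nrm]]
  rw [← Finset.sum_smul]

lemma mem_span_nrm (x : MonoidAlgebra ℤ G) :
    x ∈ Submodule.span (MonoidAlgebra ℤ G) {nrm G} ↔ ∃ c : ℤ, x = c • nrm G := by
  rw [Submodule.mem_span_singleton]
  constructor
  · rintro ⟨r, rfl⟩
    exact ⟨augmentation G r, by rw [smul_eq_mul, mul_nrm]⟩
  · rintro ⟨c, rfl⟩
    refine ⟨(c : MonoidAlgebra ℤ G), ?_⟩
    rw [smul_eq_mul, ← zsmul_eq_mul]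

lemma Sp_Sp (w : MonoidAlgebra ℤ G) : Sp (Sp w) = w := by
  conv_lhs => rw [← ma_decomp w]
  rw [Sp_sum, Sp_sum]
  simp only [Sp_single, inv_inv]
  exact ma_decomp w

lemma Sp_nrm : Sp (nrm G) = nrm G := by
  rw [nrm, Sp_sum]
  simp only [Sp_single]
  exact Fintype.sum_equiv (Equiv.inv G) _ _ (fun h => rfl)

end FintypeG

section Phi
variable {G : Type*} [Group G] [Fintype G]

lemma mem_augIdeal (x : MonoidAlgebra ℤ G) :
    x ∈ augmentationIdeal G ↔ augmentation G x = 0 := Iff.rfl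

noncomputable def eg (g : G) : augmentationIdeal G :=
  ⟨MonoidAlgebra.single g 1 - 1, by
    rw [mem_augIdeal, map_sub, map_one]
    rw [aug_single]
    ring⟩

noncomputable def Phi : MonoidAlgebra ℤ G →ₗ[MonoidAlgebra ℤ G]
    ZGDual G (augmentationIdeal G) where
  toFun w :=
    { toFun := fun x => (x : MonoidAlgebra ℤ G) * Sp w
      map_add' := fun x y => by
        push_cast
        rw [add_mul]
      map_smul' := fun r x => by
        simp only [Submodule.coe_smul, smul_eq_mul, RingHom.id_apply, mul_assoc] }
  map_add' w w' := by
    refine LinearMap.ext fun x => ?_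
    show (x : MonoidAlgebra ℤ G) * Sp (w + w') = x * Sp w + x * Sp w'
    rw [Sp_add, mul_add]
  map_smul' r w := by
    refine LinearMap.ext fun x => ?_
    show (x : MonoidAlgebra ℤ G) * Sp (r • w)
      = (x : MonoidAlgebra ℤ G) * Sp w * Sp r
    rw [smul_eq_mul, Sp_mul, mul_assoc]

lemma Phi_ker : LinearMap.ker (Phi (G := G)) = Submodule.span (MonoidAlgebra ℤ G) {nrm G} := by
  ext w
  rw [LinearMap.mem_ker, mem_span_nrm]
  constructor
  · intro hw
    have hinvar : ∀ g : G, MonoidAlgebra.single g (1:ℤ) * Sp w = Sp w := by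
      intro g
      have := congrArg (fun f : augmentationIdeal G →ₗ[MonoidAlgebra ℤ G] MonoidAlgebra ℤ G
        => f (eg g)) hw
      have h2 : (MonoidAlgebra.single g (1:ℤ) - 1) * Sp w = 0 := this
      rw [sub_mul, one_mul, sub_eq_zero] at h2
      exact h2
    have := invariant_eq_smul_nrm (Sp w) hinvar
    refine ⟨(Sp w).coeff 1, ?_⟩
    calc w = Sp (Sp w) := (Sp_Sp w).symm
    _ = Sp (((Sp w).coeff 1) • nrm G) := by rw [← this]
    _ = ((Sp w).coeff 1) • nrm G := by rw [Sp_zsmul, Sp_nrm]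
  · rintro ⟨c, rfl⟩
    refine LinearMap.ext fun x => ?_
    show (x : MonoidAlgebra ℤ G) * Sp (c • nrm G) = 0
    rw [Sp_zsmul, Sp_nrm]
    rw [smul_comm' , mul_nrm]
    · have hx : augmentation G (x : MonoidAlgebra ℤ G) = 0 := x.2
      rw [hx, zero_smul, smul_zero]
  where smul_comm' {a : MonoidAlgebra ℤ G} {c : ℤ} {b : MonoidAlgebra ℤ G} :
      a * (c • b) = c • (a * b) := by rw [mul_smul_comm]

lemma Phi_surj : Function.Surjective (Phi (G := G)) := by
  classical
  intro f
  set F : augmentationIdeal G →ₗ[MonoidAlgebra ℤ G] MonoidAlgebra ℤ G := f with hF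
  set y : G → MonoidAlgebra ℤ G := fun g => F (eg g) with hy
  have cocycle : ∀ g h : G, y (g * h) = MonoidAlgebra.single g (1:ℤ) * y h + y g := by
    intro g h
    have hdec : eg (g * h) = (MonoidAlgebra.single g (1:ℤ)) • eg h + eg g := by
      apply Subtype.ext
      push_cast [eg]
      rw [smul_eq_mul, mul_sub, MonoidAlgebra.single_mul_single, one_mul, mul_one]
      abel
    rw [hy]
    dsimp only
    rw [hdec, map_add, map_smul, smul_eq_mul]
  set wf : MonoidAlgebra ℤ G := -∑ t : G, MonoidAlgebra.single t ((y t).coeff t) with hwf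
  have wf_apply : ∀ t : G, wf.coeff t = -((y t).coeff t) := by
    intro t
    rw [hwf, MonoidAlgebra.coeff_neg, MonoidAlgebra.coeff_sum, Finsupp.neg_apply, Finsupp.finset_sum_apply]
    congr 1
    simp [MonoidAlgebra.coeff_single, Finsupp.single_apply]
  have key : ∀ (g x : G), (y g).coeff x = wf.coeff (g⁻¹ * x) - wf.coeff x := by
    intro g x
    have := cocycle g (g⁻¹ * x)
    rw [mul_inv_cancel_left] at this
    have h2 := congrArg (fun z : MonoidAlgebra ℤ G => z.coeff x) this
    rw [show ((MonoidAlgebra.single g (1:ℤ) * y (g⁻¹ * x) + y g) : MonoidAlgebra ℤ G).coeff x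
        = (MonoidAlgebra.single g (1:ℤ) * y (g⁻¹ * x)).coeff x + (y g).coeff x from rfl] at h2
    rw [MonoidAlgebra.coeff_single_mul_apply, one_mul] at h2
    rw [wf_apply, wf_apply]
    omega
  have gen : ∀ g : G, F (eg g) = (MonoidAlgebra.single g (1:ℤ) - 1) * wf := by
    intro g
    ext x
    show (y g).coeff x = ((MonoidAlgebra.single g (1:ℤ) - 1) * wf).coeff x
    rw [sub_mul, one_mul]
    rw [show (((MonoidAlgebra.single g (1:ℤ) * wf) - wf) : MonoidAlgebra ℤ G).coeff x
        = (MonoidAlgebra.single g (1:ℤ) * wf).coeff x - wf.coeff x from rfl]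
    rw [MonoidAlgebra.coeff_single_mul_apply, one_mul]
    exact key g x
  have main : ∀ z : augmentationIdeal G, F z = (z : MonoidAlgebra ℤ G) * wf := by
    intro z
    have hz0 : augmentation G (z : MonoidAlgebra ℤ G) = 0 := z.2
    have hz : (z : MonoidAlgebra ℤ G)
        = ∑ g : G, ((z : MonoidAlgebra ℤ G).coeff g) • (MonoidAlgebra.single g (1:ℤ) - 1) := by
      rw [show (∑ g : G, ((z : MonoidAlgebra ℤ G).coeff g) • (MonoidAlgebra.single g (1:ℤ) - 1))
          = (∑ g : G, MonoidAlgebra.single g ((z : MonoidAlgebra ℤ G).coeff g))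
            - (∑ g : G, ((z : MonoidAlgebra ℤ G).coeff g)) • (1 : MonoidAlgebra ℤ G) by
        rw [Finset.sum_smul]
        rw [← Finset.sum_sub_distrib]
        refine Finset.sum_congr rfl fun g _ => ?_
        rw [smul_sub, ← single_eq_smul]]
      rw [ma_decomp, ← aug_eq_sum, hz0, zero_smul, sub_zero]
    have hzI : z = ∑ g : G, ((z : MonoidAlgebra ℤ G).coeff g) • eg g := by
      apply Subtype.ext
      push_cast [eg]
      exact hz
    rw [hzI, map_sum]
    rw [show (∑ g : G, F (((z : MonoidAlgebra ℤ G).coeff g) • eg g))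
        = ∑ g : G, ((z : MonoidAlgebra ℤ G).coeff g) • ((MonoidAlgebra.single g (1:ℤ) - 1) * wf) by
      refine Finset.sum_congr rfl fun g _ => ?_
      rw [map_zsmul, gen g]]
    rw [show (∑ g : G, ((z : MonoidAlgebra ℤ G).coeff g) • ((MonoidAlgebra.single g (1:ℤ) - 1) * wf))
        = (∑ g : G, ((z : MonoidAlgebra ℤ G).coeff g) • (MonoidAlgebra.single g (1:ℤ) - 1)) * wf by
      rw [Finset.sum_mul]
      refine Finset.sum_congr rfl fun g _ => ?_
      rw [smul_mul_assoc]]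
    rw [← hz, ← hzI]
  refine ⟨Sp wf, ?_⟩
  refine LinearMap.ext fun x => ?_
  show (x : MonoidAlgebra ℤ G) * Sp (Sp wf) = F x
  rw [Sp_Sp, main]

noncomputable def eIso : ((MonoidAlgebra ℤ G) ⧸ Submodule.span (MonoidAlgebra ℤ G) {nrm G})
    ≃ₗ[MonoidAlgebra ℤ G] ZGDual G (augmentationIdeal G) :=
  (Submodule.quotEquivOfEq _ _ Phi_ker.symm).trans
    ((Phi (G := G)).quotKerEquivOfSurjective Phi_surj)

end Phi

section PiSucc
variable (R : Type*) [Semiring R] (M : Type*) [AddCommMonoid M] [Module R M] (m : ℕ)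

def piSuccLE : (Fin (m+1) → M) ≃ₗ[R] M × (Fin m → M) where
  toFun f := (f 0, fun i => f i.succ)
  invFun p := Fin.cons p.1 p.2
  left_inv f := Fin.cons_self_tail f
  right_inv p := by
    refine Prod.ext ?_ ?_
    · simp
    · funext i; simp
  map_add' f g := rfl
  map_smul' c f := rfl

end PiSucc

section IntLin
variable {m : ℕ}

noncomputable def alz (u : Fin (m+1) → ℤ) : (Fin (m+1) → ℤ) →ₗ[ℤ] ℤ where
  toFun x := ∑ i, u i * x i
  map_add' x y := by simp [mul_add, Finset.sum_add_distrib]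
  map_smul' c x := by
    show ∑ i, u i * (c • x) i = c • ∑ i, u i * x i
    simp only [Pi.smul_apply, smul_eq_mul, Finset.mul_sum]
    exact Finset.sum_congr rfl fun i _ => by ring

noncomputable def E1 (a u : Fin (m+1) → ℤ) (ha : alz u a = 1) :
    (Fin (m+1) → ℤ) ≃ₗ[ℤ] ℤ × (LinearMap.ker (alz u)) where
  toFun x := (alz u x, ⟨x - alz u x • a, by
    rw [LinearMap.mem_ker, map_sub, map_smul, ha, smul_eq_mul, mul_one, sub_self]⟩)
  invFun p := p.1 • a + (p.2 : Fin (m+1) → ℤ)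
  left_inv x := by
    show alz u x • a + (x - alz u x • a) = x
    abel
  right_inv p := by
    obtain ⟨c, y⟩ := p
    have hy : alz u (y : Fin (m+1) → ℤ) = 0 := y.2
    have h1 : alz u (c • a + (y : Fin (m+1) → ℤ)) = c := by
      rw [map_add, map_smul, ha, hy, smul_eq_mul, mul_one, add_zero]
    refine Prod.ext h1 (Subtype.ext ?_)
    show (c • a + (y : Fin (m+1) → ℤ)) - alz u (c • a + (y : Fin (m+1) → ℤ)) • a = y
    rw [h1]
    abel
  map_add' x y := by
    refine Prod.ext (by simp) (Subtype.ext ?_)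
    show (x + y) - alz u (x + y) • a
      = (x - alz u x • a) + (y - alz u y • a)
    rw [map_add, add_smul]
    abel
  map_smul' c x := by
    refine Prod.ext (map_smul (alz u) c x) (Subtype.ext ?_)
    show (c • x) - alz u (c • x) • a = c • (x - alz u x • a)
    rw [map_smul, smul_sub, smul_eq_mul, mul_smul]

lemma E1_a (a u : Fin (m+1) → ℤ) (ha : alz u a = 1) : E1 a u ha a = (1, 0) := by
  refine Prod.ext ha (Subtype.ext ?_)
  show a - alz u a • a = 0
  rw [ha, one_smul, sub_self]

noncomputable def kerEquiv (u : Fin (m+1) → ℤ) (a : Fin (m+1) → ℤ) (ha : alz u a = 1) :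
    (LinearMap.ker (alz u)) ≃ₗ[ℤ] (Fin m → ℤ) := by
  have hfree : Module.Free ℤ (LinearMap.ker (alz u)) := by infer_instance
  have hfin : Module.Finite ℤ (LinearMap.ker (alz u)) := by infer_instance
  have hrank : Module.finrank ℤ (LinearMap.ker (alz u)) = m := by
    have h1 := LinearEquiv.finrank_eq (E1 a u ha)
    rw [Module.finrank_pi, Module.finrank_prod, Module.finrank_self, Fintype.card_fin] at h1
    omega
  exact (Module.finBasisOfFinrankEq ℤ _ hrank).equivFun

end IntLin

section Tau
variable {m : ℕ}

noncomputable def tau (a u : Fin (m+1) → ℤ) (ha : alz u a = 1) :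
    (Fin (m+1) → ℤ) ≃ₗ[ℤ] (Fin (m+1) → ℤ) :=
  ((E1 a u ha).trans ((LinearEquiv.refl ℤ ℤ).prodCongr (kerEquiv u a ha))).trans
    (piSuccLE ℤ ℤ m).symm

lemma cons_one_zero (R : Type*) [Semiring R] (c : R) :
    (Fin.cons c (0 : Fin m → R) : Fin (m+1) → R) = Pi.single 0 c := by
  funext i
  refine Fin.cases ?_ (fun j => ?_) i
  · simp
  · simp only [Fin.cons_succ, Pi.zero_apply]
    rw [Pi.single_eq_of_ne (Fin.succ_ne_zero j)]

lemma tau_a (a u : Fin (m+1) → ℤ) (ha : alz u a = 1) :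
    tau a u ha a = Pi.single 0 1 := by
  rw [tau]
  simp only [LinearEquiv.trans_apply]
  rw [E1_a a u ha]
  rw [show ((LinearEquiv.refl ℤ ℤ).prodCongr (kerEquiv u a ha)) (1, 0) = (1, 0) by
    simp]
  rw [show ((piSuccLE ℤ ℤ m).symm (1, 0) : Fin (m+1) → ℤ) = Fin.cons 1 0 from rfl]
  exact cons_one_zero ℤ 1

end Tau

section MatE
variable {G : Type*} [Group G]

noncomputable def matE {p q : ℕ} (P : Matrix (Fin p) (Fin q) ℤ) :
    (Fin q → MonoidAlgebra ℤ G) →ₗ[MonoidAlgebra ℤ G] (Fin p → MonoidAlgebra ℤ G) where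
  toFun x := fun i => ∑ j, P i j • x j
  map_add' x y := by
    funext i
    simp [smul_add, Finset.sum_add_distrib]
  map_smul' r x := by
    funext i
    show ∑ j, P i j • (r • x) j = r • ∑ j, P i j • x j
    simp only [Pi.smul_apply]
    rw [Finset.smul_sum]
    exact Finset.sum_congr rfl fun j _ => (smul_comm r (P i j) (x j)).symm

lemma matE_mul {p q s : ℕ} (P : Matrix (Fin p) (Fin q) ℤ) (P' : Matrix (Fin q) (Fin s) ℤ)
    (x : Fin s → MonoidAlgebra ℤ G) :
    matE (P * P') x = matE P (matE P' x) := by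
  funext i
  show ∑ k, (P * P') i k • x k = ∑ j, P i j • ∑ k, P' j k • x k
  rw [show (∑ j, P i j • ∑ k, P' j k • x k)
      = ∑ j, ∑ k, (P i j * P' j k) • x k by
    refine Finset.sum_congr rfl fun j _ => ?_
    rw [Finset.smul_sum]
    exact Finset.sum_congr rfl fun k _ => (smul_smul (P i j) (P' j k) (x k)).symm ▸ rfl]
  rw [Finset.sum_comm]
  refine Finset.sum_congr rfl fun k _ => ?_
  rw [Matrix.mul_apply, Finset.sum_smul]

lemma matE_one {p : ℕ} (x : Fin p → MonoidAlgebra ℤ G) :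
    matE (1 : Matrix (Fin p) (Fin p) ℤ) x = x := by
  funext i
  show ∑ j, (1 : Matrix (Fin p) (Fin p) ℤ) i j • x j = x i
  simp [Matrix.one_apply, ite_smul]

noncomputable def matEquiv {p : ℕ} (P P' : Matrix (Fin p) (Fin p) ℤ)
    (h1 : P * P' = 1) (h2 : P' * P = 1) :
    (Fin p → MonoidAlgebra ℤ G) ≃ₗ[MonoidAlgebra ℤ G] (Fin p → MonoidAlgebra ℤ G) :=
  LinearEquiv.ofLinear (matE P) (matE P')
    (LinearMap.ext fun x => by
      show matE P (matE P' x) = x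
      rw [← matE_mul, h1, matE_one])
    (LinearMap.ext fun x => by
      show matE P' (matE P x) = x
      rw [← matE_mul, h2, matE_one])

end MatE

section ProdQuot
variable {R A B : Type*} [Ring R] [AddCommGroup A] [AddCommGroup B] [Module R A] [Module R B]

noncomputable def prodQuot (N : A) :
    ((A × B) ⧸ Submodule.span R {((N, 0) : A × B)}) ≃ₗ[R]
      ((A ⧸ Submodule.span R {N}) × B) := by
  set L : (A × B) →ₗ[R] ((A ⧸ Submodule.span R {N}) × B) :=
    ((Submodule.span R {N}).mkQ.comp (LinearMap.fst R A B)).prod (LinearMap.snd R A B) with hL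
  have hker : Submodule.span R {((N, 0) : A × B)} = LinearMap.ker L := by
    ext ⟨x, b⟩
    rw [Submodule.mem_span_singleton, LinearMap.mem_ker]
    constructor
    · rintro ⟨r, hr⟩
      have h1 : r • N = x := congrArg Prod.fst hr
      have h2 : b = 0 := by simpa using (congrArg Prod.snd hr).symm
      have hLx : L (x, b) = (Submodule.Quotient.mk x, b) := rfl
      rw [hLx, h2]
      refine Prod.ext ?_ rfl
      show Submodule.Quotient.mk x = (0 : A ⧸ Submodule.span R {N})
      rw [Submodule.Quotient.mk_eq_zero]
      exact Submodule.mem_span_singleton.2 ⟨r, h1⟩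
    · intro h
      have h0 : ((Submodule.Quotient.mk x : A ⧸ Submodule.span R {N}), b)
          = ((0 : A ⧸ Submodule.span R {N}), (0 : B)) := h
      have h1 : Submodule.Quotient.mk x = (0 : A ⧸ Submodule.span R {N}) :=
        congrArg Prod.fst h0
      have h2 : b = 0 := congrArg Prod.snd h0
      rw [Submodule.Quotient.mk_eq_zero, Submodule.mem_span_singleton] at h1
      obtain ⟨r, hr⟩ := h1
      exact ⟨r, by rw [Prod.smul_mk, hr, smul_zero, h2]⟩
  have hsurj : Function.Surjective L := by
    rintro ⟨xq, b⟩
    obtain ⟨x, rfl⟩ := Submodule.Quotient.mk_surjective _ xq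
    exact ⟨(x, b), rfl⟩
  exact (Submodule.quotEquivOfEq _ _ hker).trans (L.quotKerEquivOfSurjective hsurj)

end ProdQuot


/-- Let `G` be a finite group and `f : ℤ → ℤ[G]^n` an injective `ℤ[G]`-linear map from the
trivial module (such a map is determined by the `G`-invariant vector `v = f(1)`, with
`f(k) = k • v`), such that `coker f` is torsion-free as an abelian group. Then
`coker f ≅ I* ⊕ ℤ[G]^{n-1}` where `I* = Hom_{ℤ[G]}(I, ℤ[G])` is the dual of the
augmentation ideal. -/
theorem stmt_7 (G : Type*) [Group G] [Finite G] (n : ℕ)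
    (v : Fin n → MonoidAlgebra ℤ G)
    (hinv : ∀ g : G, (MonoidAlgebra.of ℤ G g) • v = v)
    (hinj : Function.Injective fun k : ℤ => k • v)
    (htf : ∀ x : (Fin n → MonoidAlgebra ℤ G) ⧸
        Submodule.span (MonoidAlgebra ℤ G) {v},
      ∀ k : ℤ, k ≠ 0 → k • x = 0 → x = 0) :
    Nonempty (((Fin n → MonoidAlgebra ℤ G) ⧸
        Submodule.span (MonoidAlgebra ℤ G) {v})
      ≃ₗ[MonoidAlgebra ℤ G]
        ZGDual G (augmentationIdeal G) × (Fin (n - 1) → MonoidAlgebra ℤ G)) := by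
  classical
  letI : Fintype G := Fintype.ofFinite G
  -- the coefficients
  set a : Fin n → ℤ := fun i => (v i).coeff (1 : G) with haa
  have hva : ∀ i, v i = a i • nrm G := by
    intro i
    refine invariant_eq_smul_nrm (v i) fun g => ?_
    have := congrFun (hinv g) i
    rw [Pi.smul_apply, smul_eq_mul] at this
    exact this
  have hvne : v ≠ 0 := by
    intro h
    have h1 : (fun k : ℤ => k • v) 1 = (fun k : ℤ => k • v) 0 := by
      simp [h]
    exact one_ne_zero (hinj h1)
  have hi0 : ∃ i, a i ≠ 0 := by
    by_contra hc
    push_neg at hc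
    refine hvne (funext fun i => ?_)
    rw [hva i, hc i, zero_smul]
    rfl
  obtain ⟨i0, hi0⟩ := hi0
  obtain ⟨m, rfl⟩ : ∃ m, n = m + 1 := ⟨n - 1, by have := i0.pos; omega⟩
  -- gcd is 1
  set J : Ideal ℤ := Ideal.span (Set.range a) with hJ
  obtain ⟨d, hd⟩ := (IsPrincipalIdealRing.principal J).principal
  have hdvd : ∀ i, d ∣ a i := by
    intro i
    have hmem : a i ∈ J := Ideal.subset_span (Set.mem_range_self i)
    rw [hd] at hmem
    obtain ⟨c, hc⟩ := Submodule.mem_span_singleton.1 hmem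
    exact ⟨c, by rw [← hc, smul_eq_mul, mul_comm]⟩
  choose bb hb using hdvd
  have hdne : d ≠ 0 := by
    intro h
    apply hi0
    rw [hb i0, h, zero_mul]
  have hbbne : bb i0 ≠ 0 := by
    intro h
    apply hi0
    rw [hb i0, h, mul_zero]
  set x : Fin (m+1) → MonoidAlgebra ℤ G := fun i => bb i • nrm G with hx
  have hdx : d • x = v := by
    funext i
    show d • (bb i • nrm G) = v i
    rw [smul_smul, ← hb i, ← hva i]
  have hmkx0 : (Submodule.Quotient.mk x :
      (Fin (m+1) → MonoidAlgebra ℤ G) ⧸ Submodule.span (MonoidAlgebra ℤ G) {v}) = 0 := by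
    refine htf _ d hdne ?_
    have h1 : d • (Submodule.Quotient.mk x :
        (Fin (m+1) → MonoidAlgebra ℤ G) ⧸ Submodule.span (MonoidAlgebra ℤ G) {v})
        = Submodule.Quotient.mk (d • x) :=
      (map_zsmul (Submodule.mkQ (Submodule.span (MonoidAlgebra ℤ G) {v})) d x).symm
    rw [h1, hdx, Submodule.Quotient.mk_eq_zero]
    exact Submodule.mem_span_singleton_self v
  rw [Submodule.Quotient.mk_eq_zero, Submodule.mem_span_singleton] at hmkx0
  obtain ⟨r, hr⟩ := hmkx0
  have hkey : a i0 * augmentation G r = bb i0 := by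
    have h1 := congrFun hr i0
    rw [Pi.smul_apply] at h1
    have h2 : r • v i0 = (a i0 * augmentation G r) • nrm G := by
      rw [hva i0, smul_eq_mul, mul_smul_comm, mul_nrm, smul_smul]
    rw [h2] at h1
    exact smul_nrm_inj h1
  have hd1 : d ∣ 1 := by
    refine ⟨augmentation G r, ?_⟩
    have h' : bb i0 * (d * augmentation G r) = bb i0 * 1 := by
      have := hkey
      rw [hb i0] at this
      linear_combination this
    exact (mul_left_cancel₀ hbbne h').symm
  have h1J : (1 : ℤ) ∈ J := hd ▸ Ideal.mem_span_singleton.2 hd1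
  rw [hJ] at h1J
  obtain ⟨u, hu⟩ := (Submodule.mem_span_range_iff_exists_fun ℤ).1 h1J
  have hua : alz u a = 1 := by
    show ∑ i, u i * a i = 1
    simpa [smul_eq_mul] using hu
  -- the matrix
  set τ := tau a u hua with hτ
  set Mt := LinearMap.toMatrix' τ.toLinearMap with hMt
  set Mt' := LinearMap.toMatrix' τ.symm.toLinearMap with hMt'
  have hMM' : Mt * Mt' = 1 := by
    rw [hMt, hMt', ← LinearMap.toMatrix'_comp]
    rw [show τ.toLinearMap ∘ₗ τ.symm.toLinearMap = LinearMap.id from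
      LinearMap.ext fun y => τ.apply_symm_apply y]
    exact LinearMap.toMatrix'_id
  have hM'M : Mt' * Mt = 1 := by
    rw [hMt, hMt', ← LinearMap.toMatrix'_comp]
    rw [show τ.symm.toLinearMap ∘ₗ τ.toLinearMap = LinearMap.id from
      LinearMap.ext fun y => τ.symm_apply_apply y]
    exact LinearMap.toMatrix'_id
  have hMa : Mt.mulVec a = (Pi.single 0 1 : Fin (m+1) → ℤ) := by
    have h1 : Matrix.toLin' Mt a = τ a := by rw [hMt, Matrix.toLin'_toMatrix']; rfl
    rw [← tau_a a u hua, ← h1, Matrix.toLin'_apply]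
  set E2 : (Fin (m+1) → MonoidAlgebra ℤ G) ≃ₗ[MonoidAlgebra ℤ G]
      (Fin (m+1) → MonoidAlgebra ℤ G) := matEquiv Mt Mt' hMM' hM'M with hE2
  have hE2v : E2 v = (Pi.single 0 (nrm G) : Fin (m+1) → MonoidAlgebra ℤ G) := by
    have h0 : E2 v = matE Mt v := rfl
    rw [h0]
    funext i
    have h1 : matE (G := G) Mt v i = ∑ j, Mt i j • (a j • nrm G) := by
      show (∑ j, Mt i j • v j) = _
      exact Finset.sum_congr rfl fun j _ => by rw [hva j]
    rw [h1]
    have h2 : ∑ j, Mt i j • (a j • nrm G) = (∑ j, Mt i j * a j) • nrm G := by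
      rw [Finset.sum_smul]
      exact Finset.sum_congr rfl fun j _ => (smul_smul (Mt i j) (a j) (nrm G))
    rw [h2]
    have h3 : ∑ j, Mt i j * a j = (Pi.single 0 1 : Fin (m+1) → ℤ) i := by
      rw [← hMa]
      rfl
    rw [h3]
    rcases eq_or_ne i 0 with h | h
    · rw [h, Pi.single_eq_same, Pi.single_eq_same, one_smul]
    · rw [Pi.single_eq_of_ne h, Pi.single_eq_of_ne h, zero_smul]
  -- assembling the equivalences
  set P := piSuccLE (MonoidAlgebra ℤ G) (MonoidAlgebra ℤ G) m with hP
  have hPs : P ((Pi.single 0 (nrm G) : Fin (m+1) → MonoidAlgebra ℤ G)) = (nrm G, 0) := by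
    refine Prod.ext ?_ ?_
    · show (Pi.single 0 (nrm G) : Fin (m+1) → MonoidAlgebra ℤ G) 0 = nrm G
      rw [Pi.single_eq_same]
    · show (fun i : Fin m => (Pi.single 0 (nrm G) : Fin (m+1) → MonoidAlgebra ℤ G) i.succ)
          = (0 : Fin m → MonoidAlgebra ℤ G)
      funext i
      show (Pi.single 0 (nrm G) : Fin (m+1) → MonoidAlgebra ℤ G) i.succ = 0
      rw [Pi.single_eq_of_ne (Fin.succ_ne_zero i)]
  have q1 : ((Fin (m+1) → MonoidAlgebra ℤ G) ⧸ Submodule.span (MonoidAlgebra ℤ G) {v})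
      ≃ₗ[MonoidAlgebra ℤ G]
      ((Fin (m+1) → MonoidAlgebra ℤ G) ⧸
        Submodule.span (MonoidAlgebra ℤ G)
          {(Pi.single 0 (nrm G) : Fin (m+1) → MonoidAlgebra ℤ G)}) :=
    Submodule.Quotient.equiv _ _ E2 (by
      rw [Submodule.map_span, Set.image_singleton, LinearEquiv.coe_coe, hE2v])
  have q2 : ((Fin (m+1) → MonoidAlgebra ℤ G) ⧸
        Submodule.span (MonoidAlgebra ℤ G)
          {(Pi.single 0 (nrm G) : Fin (m+1) → MonoidAlgebra ℤ G)})
      ≃ₗ[MonoidAlgebra ℤ G]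
      ((MonoidAlgebra ℤ G × (Fin m → MonoidAlgebra ℤ G)) ⧸
        Submodule.span (MonoidAlgebra ℤ G) {((nrm G, 0) :
          MonoidAlgebra ℤ G × (Fin m → MonoidAlgebra ℤ G))}) :=
    Submodule.Quotient.equiv _ _ P (by
      rw [Submodule.map_span, Set.image_singleton, LinearEquiv.coe_coe, hPs])
  have q3 := prodQuot (R := MonoidAlgebra ℤ G) (B := Fin m → MonoidAlgebra ℤ G) (nrm G)
  have q4 : ((MonoidAlgebra ℤ G ⧸ Submodule.span (MonoidAlgebra ℤ G) {nrm G})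
        × (Fin m → MonoidAlgebra ℤ G))
      ≃ₗ[MonoidAlgebra ℤ G]
      (ZGDual G (augmentationIdeal G) × (Fin m → MonoidAlgebra ℤ G)) :=
    (eIso (G := G)).prodCongr (LinearEquiv.refl _ _)
  exact ⟨q1.trans (q2.trans (q3.trans q4))⟩
end

section
/- If G is a finite group and J is a finitely generated Z[G]-module whose underlying abelian group is torsion-free (a Z[G]-lattice), then Ext^1_{Z[G]}(J, Z[G]) = 0. -/
open CategoryTheory Limits Finsupp

open Finsupp

lemma aux_sum_single {G : Type} [Fintype G] (r : MonoidAlgebra ℤ G) :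
    ∑ a : G, MonoidAlgebra.single a (r.coeff a) = r := by
  classical
  ext b
  rw [MonoidAlgebra.coeff_sum, Finset.sum_apply']
  simp only [MonoidAlgebra.coeff_single]
  rw [Finset.sum_eq_single b (fun c _ hc => Finsupp.single_eq_of_ne' hc)
    (fun hb => absurd (Finset.mem_univ b) hb)]
  exact Finsupp.single_eq_same

lemma key_ext {G : Type} [Group G] [Fintype G] {M : Type} [AddCommGroup M]
    [Module (MonoidAlgebra ℤ G) M] (K : Submodule (MonoidAlgebra ℤ G) M)
    (p : M →+ K) (hp : ∀ k : K, p k = k)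
    (g : K →ₗ[MonoidAlgebra ℤ G] MonoidAlgebra ℤ G) :
    ∃ h : M →ₗ[MonoidAlgebra ℤ G] MonoidAlgebra ℤ G, ∀ k : K, h k = g k := by
  classical
  let ψ : M → ℤ := fun x => (g (p x) : MonoidAlgebra ℤ G).coeff 1
  have ψadd : ∀ x y, ψ (x + y) = ψ x + ψ y := by
    intro x y
    show (g (p (x + y)) : MonoidAlgebra ℤ G).coeff 1 = _
    rw [map_add, map_add]
    rfl
  let h₀ : M →+ MonoidAlgebra ℤ G := AddMonoidHom.mk'
    (fun x => ∑ a : G, MonoidAlgebra.single a (ψ ((MonoidAlgebra.single a⁻¹ (1:ℤ)) • x)))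
    (by
      intro x y
      rw [← Finset.sum_add_distrib]
      refine Finset.sum_congr rfl fun a _ => ?_
      rw [smul_add, ψadd]; exact MonoidAlgebra.single_add _ _ _)
  have hsmul : ∀ (r : MonoidAlgebra ℤ G) (x : M), h₀ (r • x) = r • h₀ x := by
    intro r x
    induction r using MonoidAlgebra.induction_on with
    | of a =>
      show h₀ ((MonoidAlgebra.single a 1) • x) = MonoidAlgebra.single a (1:ℤ) * h₀ x
      show ∑ b : G, MonoidAlgebra.single b (ψ ((MonoidAlgebra.single b⁻¹ (1:ℤ)) • (MonoidAlgebra.single a (1:ℤ)) • x))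
        = MonoidAlgebra.single a (1:ℤ) * ∑ b : G, MonoidAlgebra.single b (ψ ((MonoidAlgebra.single b⁻¹ (1:ℤ)) • x))
      rw [Finset.mul_sum]
      refine Fintype.sum_equiv (Equiv.mulLeft a⁻¹) _ _ ?_
      intro b
      rw [smul_smul, MonoidAlgebra.single_mul_single, one_mul,
        MonoidAlgebra.single_mul_single, one_mul]
      simp [mul_inv_rev, mul_inv_cancel_left]
    | add f g hf hg => rw [add_smul, add_smul, map_add, hf, hg]
    | smul c f hf =>
      rw [smul_assoc, AddMonoidHom.map_zsmul, hf, smul_assoc]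
  refine ⟨{ toFun := h₀, map_add' := h₀.map_add, map_smul' := hsmul }, ?_⟩
  intro k
  show h₀ (k : M) = g k
  show ∑ a : G, MonoidAlgebra.single a (ψ ((MonoidAlgebra.single a⁻¹ (1:ℤ)) • (k:M))) = g k
  have hterm : ∀ a : G, ψ ((MonoidAlgebra.single a⁻¹ (1:ℤ)) • (k:M)) = (g k).coeff a := by
    intro a
    have hmem : (MonoidAlgebra.single a⁻¹ (1:ℤ)) • (k:M) ∈ K :=
      K.smul_mem _ k.2
    show (g (p ((MonoidAlgebra.single a⁻¹ (1:ℤ)) • (k:M))) : MonoidAlgebra ℤ G).coeff 1 = (g k).coeff a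
    rw [show p ((MonoidAlgebra.single a⁻¹ (1:ℤ)) • (k:M))
        = (⟨(MonoidAlgebra.single a⁻¹ (1:ℤ)) • (k:M), hmem⟩ : K) from hp ⟨_, hmem⟩]
    rw [show (⟨(MonoidAlgebra.single a⁻¹ (1:ℤ)) • (k:M), hmem⟩ : K)
        = (MonoidAlgebra.single a⁻¹ (1:ℤ)) • k from rfl]
    rw [map_smul]
    show (MonoidAlgebra.single a⁻¹ (1:ℤ) * g k).coeff 1 = (g k).coeff a
    rw [MonoidAlgebra.coeff_single_mul_apply, inv_inv, mul_one, one_mul]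
  calc ∑ a : G, MonoidAlgebra.single a (ψ ((MonoidAlgebra.single a⁻¹ (1:ℤ)) • (k:M)))
      = ∑ a : G, MonoidAlgebra.single a ((g k).coeff a) :=
        Finset.sum_congr rfl fun a _ => by rw [hterm a]
    _ = g k := aux_sum_single _

/-- If `G` is a finite group and `J` is a finitely generated `ℤ[G]`-module whose underlying
abelian group is torsion-free (a `ℤ[G]`-lattice), then `Ext¹_{ℤ[G]}(J, ℤ[G]) = 0`. -/
theorem stmt_8 (G : Type) [Group G] [Finite G]
    (J : Type) [AddCommGroup J] [Module (MonoidAlgebra ℤ G) J]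
    [Module.Finite (MonoidAlgebra ℤ G) J] [NoZeroSMulDivisors ℤ J] :
    Subsingleton ((((Ext ℤ (ModuleCat (MonoidAlgebra ℤ G)) 1).obj
        (Opposite.op (ModuleCat.of (MonoidAlgebra ℤ G) J))).obj
        (ModuleCat.of (MonoidAlgebra ℤ G) (MonoidAlgebra ℤ G)))) := by
  have : Fintype G := Fintype.ofFinite G
  set R := MonoidAlgebra ℤ G with hR
  let X : ModuleCat R := ModuleCat.of R J
  let Y : ModuleCat R := ModuleCat.of R R
  let P : ProjectiveResolution X := ProjectiveResolution.of X
  suffices hz : IsZero ((P.complex.linearYonedaObj ℤ Y).homology 1) by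
    have h2 := hz.of_iso (P.isoExt (R := ℤ) 1 Y)
    rw [IsZero.iff_id_eq_zero] at h2
    constructor
    intro a b
    calc a = 0 := by have := congrArg (fun φ => φ a) h2; simpa using this
      _ = b := by have := congrArg (fun φ => φ b) h2; simpa using this.symm
  rw [← HomologicalComplex.exactAt_iff_isZero_homology]
  rw [HomologicalComplex.exactAt_iff' _ 0 1 2 (by simp) (by simp)]
  rw [ShortComplex.moduleCat_exact_iff]
  intro f₀ hf₀
  dsimp [ChainComplex.linearYonedaObj] at f₀ hf₀ ⊢
  let f : P.complex.X 1 ⟶ Y := f₀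
  have hf : P.complex.d 2 1 ≫ f = 0 := hf₀
  let flin : (P.complex.X 1 : Type) →ₗ[R] R := f.hom
  -- Set up the module-theoretic data
  let d10 : (P.complex.X 1 : Type) →ₗ[R] (P.complex.X 0 : Type) := (P.complex.d 1 0).hom
  let d21 : (P.complex.X 2 : Type) →ₗ[R] (P.complex.X 1 : Type) := (P.complex.d 2 1).hom
  let e : ((((ChainComplex.single₀ (ModuleCat R)).obj X).X 0 : Type)) ≃ₗ[R] J :=
    (HomologicalComplex.singleObjXSelf (ComplexShape.down ℕ) 0 X).toLinearEquiv
  let π₀ : (P.complex.X 0 : Type) →ₗ[R] J := e.toLinearMap.comp (P.π.f 0).hom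
  have hπ₀surj : Function.Surjective π₀ := by
    have h1 : Function.Surjective (P.π.f 0).hom :=
      (ModuleCat.epi_iff_surjective (P.π.f 0)).mp inferInstance
    exact e.surjective.comp h1
  let K : Submodule R (P.complex.X 0 : Type) := LinearMap.range d10
  have hK : K = LinearMap.ker π₀ := by
    have hex := P.exact₀
    have h1 : LinearMap.range (P.complex.d 1 0).hom = LinearMap.ker (P.π.f 0).hom :=
      (ShortComplex.moduleCat_exact_iff_range_eq_ker _).mp hex
    show LinearMap.range d10 = _
    rw [show π₀ = e.toLinearMap.comp (P.π.f 0).hom from rfl, LinearMap.ker_comp,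
      LinearEquiv.ker, Submodule.comap_bot]
    exact h1
  have hker21 : LinearMap.range d21 = LinearMap.ker d10 := by
    have hex := P.exact_succ 0
    exact (ShortComplex.moduleCat_exact_iff_range_eq_ker _).mp hex
  -- J is ℤ-free, get a ℤ-linear splitting of π₀
  have hfinJ : Module.Finite ℤ J := by
    have h1 : Module.Finite ℤ (G →₀ ℤ) :=
      Module.Finite.equiv (Finsupp.linearEquivFunOnFinite ℤ ℤ G).symm
    have h2 : Module.Finite ℤ R := Module.Finite.equiv (MonoidAlgebra.coeffLinearEquiv ℤ).symm
    exact Module.Finite.trans R J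
  have hprojJ : Module.Projective ℤ J := inferInstance
  obtain ⟨s, hs⟩ := Module.projective_lifting_property
    (π₀.toAddMonoidHom.toIntLinearMap) LinearMap.id
    (by intro y; obtain ⟨x, hx⟩ := hπ₀surj y; exact ⟨x, hx⟩)
  -- the retraction p onto K
  have hmem : ∀ x : (P.complex.X 0 : Type), x - s (π₀ x) ∈ K := by
    intro x
    rw [hK, LinearMap.mem_ker, map_sub]
    have h3 : π₀ (s (π₀ x)) = π₀ x := congrArg (fun φ => φ (π₀ x)) hs
    rw [h3, sub_self]
  let p : (P.complex.X 0 : Type) →+ K := AddMonoidHom.mk'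
    (fun x => ⟨x - s (π₀ x), hmem x⟩)
    (by intro x y; ext; simp; abel)
  have hp : ∀ k : K, p k = k := by
    intro k
    ext
    show (k : (P.complex.X 0 : Type)) - s (π₀ k) = k
    have h4 : π₀ (k : (P.complex.X 0 : Type)) = 0 := by
      have h5 : (k : (P.complex.X 0 : Type)) ∈ LinearMap.ker π₀ := hK ▸ k.2
      exact h5
    rw [h4, map_zero, sub_zero]
  -- f factors through K
  have hkerle : LinearMap.ker d10 ≤ LinearMap.ker flin := by
    intro x hx
    rw [← hker21] at hx
    obtain ⟨y, hy⟩ := hx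
    rw [LinearMap.mem_ker, ← hy]
    exact congrArg (fun φ => φ.hom y) hf
  let g : K →ₗ[R] R :=
    (Submodule.liftQ (LinearMap.ker d10) flin
      hkerle).comp (LinearMap.quotKerEquivRange d10).symm.toLinearMap
  obtain ⟨h, hk⟩ := key_ext K p hp g
  refine ⟨ModuleCat.ofHom h, ?_⟩
  show P.complex.d 1 0 ≫ (show P.complex.X 0 ⟶ Y from ModuleCat.ofHom h) = f
  refine ModuleCat.hom_ext (LinearMap.ext ?_)
  intro x
  show h (d10 x) = f x
  have hxK : d10 x ∈ K := ⟨x, rfl⟩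
  have h1 : h (d10 x) = g ⟨d10 x, hxK⟩ := hk ⟨d10 x, hxK⟩
  rw [h1]
  show Submodule.liftQ (LinearMap.ker d10) flin hkerle
    ((LinearMap.quotKerEquivRange d10).symm ⟨d10 x, hxK⟩) = f x
  have h2 : (LinearMap.quotKerEquivRange d10).symm ⟨d10 x, hxK⟩
      = Submodule.Quotient.mk x := by
    rw [LinearEquiv.symm_apply_eq]
    exact Subtype.ext (LinearMap.quotKerEquivRange_apply_mk d10 (x := x)).symm
  rw [h2, Submodule.liftQ_apply]
end

section
/- Let G be a finite group and P a finitely generated projective Z[G]-module such that P ⊗_Z Q ≅ Q[G] as Q[G]-modules. Then there exists a surjective Z[G]-module homomorphism φ: P → Z onto the trivial module Z. -/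
open TensorProduct

/-- The trivial `ℤ[G]`-module `ℤ` (every `g ∈ G` acts as the identity). -/
def TrivialMod (G : Type*) [Group G] : Type := ℤ

instance (G : Type*) [Group G] : AddCommGroup (TrivialMod G) :=
  inferInstanceAs (AddCommGroup ℤ)

noncomputable instance (G : Type*) [Group G] :
    Module (MonoidAlgebra ℤ G) (TrivialMod G) :=
  Module.compHom ℤ (augmentation G).toRingHom

/-- Let `G` be a finite group and `P` a finitely generated projective `ℤ[G]`-module such
that `P ⊗_ℤ ℚ ≅ ℚ[G]` as `ℚ[G]`-modules (expressed as a `ℚ`-linear, `G`-equivariant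
isomorphism `ℚ ⊗[ℤ] P ≃ ℚ[G]`). Then there is a surjective `ℤ[G]`-linear map from `P`
onto the trivial module `ℤ`. -/
theorem stmt_9 (G : Type*) [Group G] [Finite G]
    (P : Type*) [AddCommGroup P] [Module (MonoidAlgebra ℤ G) P]
    [Module.Finite (MonoidAlgebra ℤ G) P] [Module.Projective (MonoidAlgebra ℤ G) P]
    (e : (ℚ ⊗[ℤ] P) ≃ₗ[ℚ] MonoidAlgebra ℚ G)
    (he : ∀ (g : G) (q : ℚ) (x : P),
      e (q ⊗ₜ (MonoidAlgebra.of ℤ G g • x)) = MonoidAlgebra.of ℚ G g * e (q ⊗ₜ x)) :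
    ∃ φ : P →ₗ[MonoidAlgebra ℤ G] TrivialMod G, Function.Surjective φ := by
  classical
  haveI : Fintype G := Fintype.ofFinite G
  haveI : Module.Finite ℤ (MonoidAlgebra ℤ G) :=
    Module.Finite.of_basis (MonoidAlgebra.basis G ℤ)
  haveI hPfin : Module.Finite ℤ P := Module.Finite.trans (MonoidAlgebra ℤ G) P
  set εQ : MonoidAlgebra ℚ G →ₐ[ℚ] ℚ := MonoidAlgebra.lift ℚ ℚ G 1 with hεQ
  set ψ : P →ₗ[ℤ] ℚ :=
    (εQ.toLinearMap.restrictScalars ℤ).comp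
      ((e.toLinearMap.restrictScalars ℤ).comp ((TensorProduct.mk ℤ ℚ P) 1)) with hψ
  have hψof : ∀ (g : G) (x : P), ψ (MonoidAlgebra.of ℤ G g • x) = ψ x := by
    intro g x
    show εQ (e ((1:ℚ) ⊗ₜ (MonoidAlgebra.of ℤ G g • x))) = εQ (e ((1:ℚ) ⊗ₜ x))
    rw [he g 1 x, map_mul, MonoidAlgebra.lift_of, MonoidHom.one_apply, one_mul]
  have hψne : ∃ x : P, ψ x ≠ 0 := by
    by_contra h
    push_neg at h
    have hL : ∀ t : ℚ ⊗[ℤ] P, εQ (e t) = 0 := by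
      intro t
      induction t using TensorProduct.induction_on with
      | zero => simp
      | tmul q x =>
        have hq : (q : ℚ) ⊗ₜ[ℤ] x = q • ((1:ℚ) ⊗ₜ[ℤ] x) := by
          rw [TensorProduct.smul_tmul', smul_eq_mul, mul_one]
        have h0 : εQ (e ((1:ℚ) ⊗ₜ[ℤ] x)) = 0 := h x
        rw [hq, map_smul, map_smul, smul_eq_mul, h0, mul_zero]
      | add a b ha hb => rw [map_add, map_add, ha, hb, add_zero]
    have h1 : εQ (e (e.symm 1)) = 0 := hL _
    rw [e.apply_symm_apply, map_one] at h1
    exact one_ne_zero h1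
  obtain ⟨x₀, hx₀⟩ := hψne
  set M : Submodule ℤ ℚ := LinearMap.range ψ with hM
  have hMfg : M.FG := by
    rw [hM, LinearMap.range_eq_map]
    exact (Module.finite_def.mp hPfin).map ψ
  have hMbot : M ≠ ⊥ := by
    intro hb
    apply hx₀
    have : ψ x₀ ∈ M := LinearMap.mem_range_self ψ x₀
    rwa [hb, Submodule.mem_bot] at this
  haveI hprin : M.IsPrincipal :=
    FractionalIdeal.isPrincipal (R := ℤ) (K := ℚ)
      ⟨M, FractionalIdeal.isFractional_of_fg hMfg⟩
  set a : ℚ := Submodule.IsPrincipal.generator M with ha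
  have haspan : Submodule.span ℤ {a} = M := Submodule.IsPrincipal.span_singleton_generator M
  have hane : a ≠ 0 := by
    intro h0
    apply hMbot
    rw [← haspan, h0, Submodule.span_singleton_eq_bot]
  set f : ℤ →ₗ[ℤ] ℚ := LinearMap.toSpanSingleton ℤ ℚ a with hfdef
  have hf : Function.Injective f := smul_left_injective ℤ hane
  have hrange : LinearMap.range f = M := by
    rw [← LinearMap.span_singleton_eq_range]; exact haspan
  set eq1 : M ≃ₗ[ℤ] LinearMap.range f := LinearEquiv.ofEq _ _ hrange.symm with heq1
  set eq2 : LinearMap.range f ≃ₗ[ℤ] ℤ := (LinearEquiv.ofInjective f hf).symm with heq2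
  set φ0 : P →ₗ[ℤ] ℤ := eq2.toLinearMap ∘ₗ eq1.toLinearMap ∘ₗ ψ.rangeRestrict with hφ0
  have h2 : ∀ y : LinearMap.range f, f (eq2 y) = (y : ℚ) := by
    intro y
    have h3 := (LinearEquiv.ofInjective f hf).apply_symm_apply y
    have h4 := LinearEquiv.ofInjective_apply f (h := hf)
      (x := (LinearEquiv.ofInjective f hf).symm y)
    rw [h3] at h4
    exact h4.symm
  have key : ∀ x : P, (φ0 x) • a = ψ x := by
    intro x
    have h1 : f (φ0 x) = ψ x := by
      show f (eq2 (eq1 (ψ.rangeRestrict x))) = ψ x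
      rw [h2]
      rfl
    rw [← h1, hfdef, LinearMap.toSpanSingleton_apply]
  have hsurj : Function.Surjective φ0 := by
    intro n
    obtain ⟨x, hx⟩ := ψ.surjective_rangeRestrict (eq1.symm (eq2.symm n))
    refine ⟨x, ?_⟩
    show eq2 (eq1 (ψ.rangeRestrict x)) = n
    rw [hx, eq1.apply_symm_apply, eq2.apply_symm_apply]
  have hφ0of : ∀ (g : G) (x : P), φ0 (MonoidAlgebra.of ℤ G g • x) = φ0 x := by
    intro g x
    apply smul_left_injective ℤ hane (M := ℚ)
    show φ0 (MonoidAlgebra.of ℤ G g • x) • a = φ0 x • a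
    rw [key, key, hψof]
  have haug : ∀ g : G, augmentation G (MonoidAlgebra.of ℤ G g) = 1 := by
    intro g
    show MonoidAlgebra.lift ℤ ℤ G 1 (MonoidAlgebra.of ℤ G g) = 1
    rw [MonoidAlgebra.lift_of, MonoidHom.one_apply]
  have hlin : ∀ (r : MonoidAlgebra ℤ G) (x : P),
      φ0 (r • x) = augmentation G r * φ0 x := by
    intro r
    induction r using MonoidAlgebra.induction_on with
    | of g => intro x; rw [hφ0of, haug, one_mul]
    | add s t hs ht =>
      intro x
      rw [add_smul, map_add, map_add, hs, ht, add_mul]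
    | smul c s hs =>
      intro x
      rw [smul_assoc, map_smul, hs x, map_smul, smul_mul_assoc]
  refine ⟨{ toFun := fun x => (φ0 x : TrivialMod G),
            map_add' := fun x y => φ0.map_add x y,
            map_smul' := fun r x => hlin r x }, hsurj⟩
end

section
/- Let G be a finite group, I the augmentation ideal of Z[G], and P a finitely generated projective Z[G]-module of rank 1 with P ⊗_Z Q ≅ Q[G]. Then there exists a Z[G]-lattice J such that I ⊕ P ≅ J ⊕ Z[G], and consequently the Z-rank of J equals |G| - 1. -/
open TensorProduct

section pieces
variable {G : Type*} [Group G] [Finite G]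
    {P : Type*} [AddCommGroup P] [Module (MonoidAlgebra ℤ G) P]
    [Module.Finite (MonoidAlgebra ℤ G) P] [Module.Projective (MonoidAlgebra ℤ G) P]
    (e : (ℚ ⊗[ℤ] P) ≃ₗ[ℚ] MonoidAlgebra ℚ G)
    (he : ∀ (g : G) (q : ℚ) (x : P),
      e (q ⊗ₜ (MonoidAlgebra.of ℤ G g • x)) = MonoidAlgebra.of ℚ G g * e (q ⊗ₜ x))

instance : Module.Finite ℤ (MonoidAlgebra ℤ G) :=
  Module.Finite.equiv (MonoidAlgebra.coeffLinearEquiv ℤ).symm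
instance : NoZeroSMulDivisors ℤ (MonoidAlgebra ℤ G) :=
  Function.Injective.noZeroSMulDivisors (MonoidAlgebra.coeffLinearEquiv (S := ℤ) (M := G) ℤ)
    (MonoidAlgebra.coeffLinearEquiv ℤ).injective (map_zero _) (map_smul _)

/-- the rational augmentation -/
noncomputable def augQ : MonoidAlgebra ℚ G →ₐ[ℚ] ℚ := MonoidAlgebra.lift ℚ ℚ G 1

/-- the basic rational functional on `P` -/
noncomputable def phi : P →ₗ[ℤ] ℚ :=
  ((augQ (G := G)).toLinearMap.restrictScalars ℤ).comp
    (((e : ℚ ⊗[ℤ] P →ₗ[ℚ] MonoidAlgebra ℚ G).restrictScalars ℤ).comp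
      (TensorProduct.mk ℤ ℚ P 1))

lemma phi_apply (p : P) : phi e p = augQ (e ((1:ℚ) ⊗ₜ p)) := rfl

include he in
lemma phi_equivariant (r : MonoidAlgebra ℤ G) (p : P) :
    phi e (r • p) = (augmentation G r : ℚ) * phi e p := by
  induction r using MonoidAlgebra.induction_on with
  | of g =>
    rw [phi_apply, phi_apply, he]
    rw [map_mul]
    have h1 : augQ (G := G) (MonoidAlgebra.of ℚ G g) = 1 := by
      simp [augQ, MonoidAlgebra.lift_single]
    have h2 : augmentation G (MonoidAlgebra.of ℤ G g) = 1 := by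
      simp [augmentation, MonoidAlgebra.lift_single]
    rw [h1, h2]
    push_cast
    ring
  | add f g hf hg =>
    rw [add_smul, map_add, hf, hg, map_add]
    push_cast
    ring
  | smul n f hf =>
    rw [smul_assoc, map_zsmul, hf, map_zsmul]
    simp only [zsmul_eq_mul, Int.cast_mul]
    push_cast
    ring

lemma phi_ne_zero : ∃ p : P, phi e p ≠ 0 := by
  by_contra h
  push_neg at h
  have hL : ∀ x : ℚ ⊗[ℤ] P, augQ (G := G) (e x) = 0 := by
    have hzero : (((augQ (G := G)).toLinearMap.comp
        (e : ℚ ⊗[ℤ] P →ₗ[ℚ] MonoidAlgebra ℚ G)).restrictScalars ℤ) = 0 := by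
      apply TensorProduct.ext'
      intro q p
      have hq : (q : ℚ) ⊗ₜ[ℤ] p = q • ((1:ℚ) ⊗ₜ[ℤ] p) := by
        rw [TensorProduct.smul_tmul', smul_eq_mul, mul_one]
      have hp := h p
      rw [phi_apply] at hp
      simp only [LinearMap.coe_restrictScalars, LinearMap.comp_apply,
        AlgHom.toLinearMap_apply, hq, LinearEquiv.coe_coe, map_smul,
        LinearMap.zero_apply, hp, smul_zero]
      change augQ (G := G) (e (q • (1:ℚ) ⊗ₜ[ℤ] p)) = 0
      rw [map_smul, map_smul, hp, smul_zero]
    intro x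
    exact LinearMap.congr_fun hzero x
  have h1 : augQ (G := G) (e (e.symm 1)) = 0 := hL _
  rw [e.apply_symm_apply, map_one] at h1
  exact one_ne_zero h1

include he in
lemma exists_g : ∃ g : P →ₗ[ℤ] ℤ, Function.Surjective g ∧
    ∀ (r : MonoidAlgebra ℤ G) (p : P), g (r • p) = augmentation G r * g p := by
  haveI : Module.Finite ℤ P := Module.Finite.trans (MonoidAlgebra ℤ G) P
  set A : Submodule ℤ ℚ := LinearMap.range (phi e) with hA
  have hfg : A.FG := by
    rw [hA, LinearMap.range_eq_map]
    exact Submodule.FG.map _ (Module.finite_def.mp inferInstance)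
  have hA0 : A ≠ ⊥ := by
    obtain ⟨p, hp⟩ := phi_ne_zero e
    intro hbot
    have hm : phi e p ∈ A := LinearMap.mem_range_self _ p
    rw [hbot, Submodule.mem_bot] at hm
    exact hp hm
  have hfrac : IsFractional (nonZeroDivisors ℤ) A :=
    FractionalIdeal.isFractional_of_fg hfg
  obtain ⟨c, hc⟩ :=
    (FractionalIdeal.isPrincipal (⟨A, hfrac⟩ : FractionalIdeal (nonZeroDivisors ℤ) ℚ)).principal
  have hc' : A = Submodule.span ℤ {c} := hc
  have hc0 : c ≠ 0 := by
    rintro rfl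
    exact hA0 (by simp [hc'])
  set ψ : P →ₗ[ℤ] ℚ := c⁻¹ • phi e with hψ
  have hψ_apply : ∀ p : P, ψ p = c⁻¹ * phi e p := fun p => rfl
  have hmem : ∀ p : P, ∃ k : ℤ, ψ p = (k : ℚ) := by
    intro p
    have : phi e p ∈ A := LinearMap.mem_range_self _ p
    rw [hc', Submodule.mem_span_singleton] at this
    obtain ⟨k, hk⟩ := this
    refine ⟨k, ?_⟩
    rw [hψ_apply, ← hk, zsmul_eq_mul]
    field_simp
  have hone : ∃ p1 : P, ψ p1 = 1 := by
    have : c ∈ A := by rw [hc']; exact Submodule.mem_span_singleton_self c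
    obtain ⟨p1, hp1⟩ := this
    exact ⟨p1, by rw [hψ_apply, hp1, inv_mul_cancel₀ hc0]⟩
  set i : ℤ →ₗ[ℤ] ℚ := Algebra.linearMap ℤ ℚ with hi
  have hi_inj : Function.Injective i := fun a b h => by
    simpa [hi] using h
  have hri : ∀ p : P, ψ p ∈ LinearMap.range i := by
    intro p
    obtain ⟨k, hk⟩ := hmem p
    exact ⟨k, by simp [hi, hk]⟩
  set g : P →ₗ[ℤ] ℤ :=
    ((LinearEquiv.ofInjective i hi_inj).symm.toLinearMap).comp
      (ψ.codRestrict (LinearMap.range i) hri) with hg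
  have hgc : ∀ p : P, (g p : ℚ) = ψ p := by
    intro p
    have h1 : i (g p) = ψ p := by
      show i ((LinearEquiv.ofInjective i hi_inj).symm ⟨ψ p, hri p⟩) = ψ p
      have := LinearEquiv.ofInjective_apply (f := i) (h := hi_inj)
        ((LinearEquiv.ofInjective i hi_inj).symm ⟨ψ p, hri p⟩)
      rw [LinearEquiv.apply_symm_apply] at this
      exact this.symm
    simpa [hi] using h1
  obtain ⟨p1, hp1⟩ := hone
  have hg1 : g p1 = 1 := by
    have := hgc p1
    rw [hp1] at this
    exact_mod_cast this
  refine ⟨g, ?_, ?_⟩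
  · intro m
    refine ⟨m • p1, ?_⟩
    rw [map_smul, hg1, smul_eq_mul, mul_one]
  · intro r p
    have : (g (r • p) : ℚ) = ((augmentation G r * g p : ℤ) : ℚ) := by
      rw [hgc, hψ_apply, phi_equivariant e he, Int.cast_mul, hgc, hψ_apply]
      ring
    exact_mod_cast this

end pieces

noncomputable def splitEquiv {R M N : Type*} [Ring R] [AddCommGroup M] [Module R M]
    [AddCommGroup N] [Module R N] (π : M →ₗ[R] N) (s : N →ₗ[R] M)
    (hs : ∀ n, π (s n) = n) :
    M ≃ₗ[R] (LinearMap.ker π × N) :=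
  LinearEquiv.ofLinear
    (LinearMap.prod
      ((LinearMap.id - s ∘ₗ π).codRestrict (LinearMap.ker π)
        (fun m => by simp [hs]))
      π)
    ((LinearMap.ker π).subtype.coprod s)
    (by ext x <;> simp [hs])
    (by ext m <;> simp)


/-- Let `G` be a finite group, `I` the augmentation ideal of `ℤ[G]`, and `P` a finitely
generated projective `ℤ[G]`-module of rank 1, i.e. with `P ⊗_ℤ ℚ ≅ ℚ[G]` as `ℚ[G]`-modules
(expressed as a `ℚ`-linear `G`-equivariant isomorphism). Then there is a `ℤ[G]`-lattice `J`
with `I ⊕ P ≅ J ⊕ ℤ[G]`, and consequently the `ℤ`-rank of `J` is `|G| - 1`. -/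
theorem stmt_10 (G : Type*) [Group G] [Finite G]
    (P : Type*) [AddCommGroup P] [Module (MonoidAlgebra ℤ G) P]
    [Module.Finite (MonoidAlgebra ℤ G) P] [Module.Projective (MonoidAlgebra ℤ G) P]
    (e : (ℚ ⊗[ℤ] P) ≃ₗ[ℚ] MonoidAlgebra ℚ G)
    (he : ∀ (g : G) (q : ℚ) (x : P),
      e (q ⊗ₜ (MonoidAlgebra.of ℤ G g • x)) = MonoidAlgebra.of ℚ G g * e (q ⊗ₜ x)) :
    ∃ J : Submodule (MonoidAlgebra ℤ G) P,
      NoZeroSMulDivisors ℤ J ∧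
      Nonempty ((augmentationIdeal G × P) ≃ₗ[MonoidAlgebra ℤ G]
        (J × MonoidAlgebra ℤ G)) ∧
      Module.finrank ℤ J = Nat.card G - 1 := by
  classical
  obtain ⟨g, hgsurj, hgeq⟩ := exists_g e he
  haveI : Module.Finite ℤ P := Module.Finite.trans (MonoidAlgebra ℤ G) P
  -- torsion-freeness of P
  haveI tfP : NoZeroSMulDivisors ℤ P := by
    obtain ⟨s, hs⟩ := ‹Module.Projective (MonoidAlgebra ℤ G) P›.out
    have hinj : Function.Injective s := hs.injective
    refine ⟨fun {n p} h => ?_⟩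
    have h1 : s (n • p) = 0 := by rw [h, map_zero]
    rw [← algebraMap_smul (MonoidAlgebra ℤ G) n p, map_smul,
      algebraMap_smul (MonoidAlgebra ℤ G)] at h1
    rcases smul_eq_zero.mp h1 with h2 | h2
    · exact Or.inl h2
    · exact Or.inr (hinj (by rw [h2, map_zero]))
  -- the lattice J
  set J : Submodule (MonoidAlgebra ℤ G) P :=
    { carrier := {p | g p = 0}
      add_mem' := fun {a b} ha hb => by
        simp only [Set.mem_setOf_eq] at *
        rw [map_add, ha, hb, add_zero]
      zero_mem' := by simp
      smul_mem' := fun r p hp => by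
        simp only [Set.mem_setOf_eq] at *
        rw [hgeq, hp, mul_zero] } with hJ
  have hJmem : ∀ p : P, p ∈ J ↔ g p = 0 := fun p => Iff.rfl
  -- NoZeroSMulDivisors for J
  have hnz : NoZeroSMulDivisors ℤ J := by
    refine ⟨fun {n x} h => ?_⟩
    have hc : (↑(n • x) : P) = n • (x : P) := rfl
    have h0 : n • (x : P) = 0 := by rw [← hc, h]; rfl
    rcases smul_eq_zero.mp h0 with h1 | h1
    · exact Or.inl h1
    · exact Or.inr (by ext; exact h1)
  -- the pullback module X
  set X : Submodule (MonoidAlgebra ℤ G) (MonoidAlgebra ℤ G × P) :=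
    { carrier := {x | augmentation G x.1 = g x.2}
      add_mem' := fun {a b} ha hb => by
        simp only [Set.mem_setOf_eq] at *
        rw [Prod.fst_add, Prod.snd_add, map_add, map_add, ha, hb]
      zero_mem' := by simp
      smul_mem' := fun r x hx => by
        simp only [Set.mem_setOf_eq] at *
        rw [Prod.smul_fst, Prod.smul_snd, smul_eq_mul, map_mul, hgeq, hx] } with hX
  have hXmem : ∀ x : MonoidAlgebra ℤ G × P, x ∈ X ↔ augmentation G x.1 = g x.2 :=
    fun x => Iff.rfl
  set π₁ : X →ₗ[MonoidAlgebra ℤ G] MonoidAlgebra ℤ G :=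
    (LinearMap.fst _ _ _).comp X.subtype with hπ₁
  set π₂ : X →ₗ[MonoidAlgebra ℤ G] P :=
    (LinearMap.snd _ _ _).comp X.subtype with hπ₂
  have hπ₁surj : Function.Surjective π₁ := by
    intro a
    obtain ⟨p, hp⟩ := hgsurj (augmentation G a)
    exact ⟨⟨(a, p), hp.symm⟩, rfl⟩
  have hπ₂surj : Function.Surjective π₂ := by
    intro p
    refine ⟨⟨(algebraMap ℤ (MonoidAlgebra ℤ G) (g p), p), ?_⟩, rfl⟩
    show augmentation G (algebraMap ℤ (MonoidAlgebra ℤ G) (g p)) = g p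
    rw [AlgHom.commutes]
    rfl
  obtain ⟨s₁, hs₁⟩ := Module.projective_lifting_property π₁ LinearMap.id hπ₁surj
  obtain ⟨s₂, hs₂⟩ := Module.projective_lifting_property π₂ LinearMap.id hπ₂surj
  have eq1 := splitEquiv π₁ s₁ (fun a => LinearMap.congr_fun hs₁ a)
  have eq2 := splitEquiv π₂ s₂ (fun p => LinearMap.congr_fun hs₂ p)
  -- kernel of π₂ is the augmentation ideal
  have eI : (augmentationIdeal G) ≃ₗ[MonoidAlgebra ℤ G] LinearMap.ker π₂ :=
    { toFun := fun a => ⟨⟨(a.1, 0), by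
        show augmentation G a.1 = g 0
        rw [map_zero]
        exact RingHom.mem_ker.mp a.2⟩, by
        show π₂ _ = 0
        rfl⟩
      map_add' := fun a b => by ext <;> simp
      map_smul' := fun r a => by ext <;> simp [smul_eq_mul]
      invFun := fun x => ⟨x.1.1.1, by
        have h1 : augmentation G x.1.1.1 = g x.1.1.2 := x.1.2
        have h2 : x.1.1.2 = 0 := x.2
        rw [h2, map_zero] at h1
        exact RingHom.mem_ker.mpr h1⟩
      left_inv := fun a => by ext; rfl
      right_inv := fun x => by
        ext
        · rfl
        · exact (x.2 : x.1.1.2 = 0).symm }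
  -- kernel of π₁ is J
  have eJ : LinearMap.ker π₁ ≃ₗ[MonoidAlgebra ℤ G] J :=
    { toFun := fun x => ⟨x.1.1.2, by
        have h1 : augmentation G x.1.1.1 = g x.1.1.2 := x.1.2
        have h2 : x.1.1.1 = 0 := x.2
        rw [hJmem, ← h1, h2, map_zero]⟩
      map_add' := fun a b => by ext; simp
      map_smul' := fun r a => by ext; simp
      invFun := fun p => ⟨⟨(0, p.1), by
        show augmentation G 0 = g p.1
        rw [map_zero, (hJmem p.1).mp p.2]⟩, by
        show π₁ _ = 0
        rfl⟩
      left_inv := fun x => by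
        apply Subtype.ext
        apply Subtype.ext
        have h2 : x.1.1.1 = 0 := x.2
        exact Prod.ext h2.symm rfl
      right_inv := fun p => by ext; rfl }
  refine ⟨J, hnz, ⟨?_⟩, ?_⟩
  · exact (eI.prodCongr (LinearEquiv.refl _ P)).trans
      (eq2.symm.trans (eq1.trans (eJ.prodCongr (LinearEquiv.refl _ _))))
  · -- rank computation
    haveI : Module.Free ℤ P := Module.free_of_finite_type_torsion_free'
    have hrkP : Module.finrank ℤ P = Nat.card G := by
      have h1 : Module.finrank ℚ (ℚ ⊗[ℤ] P) = Module.finrank ℤ P :=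
        Module.finrank_baseChange
      have h2 : Module.finrank ℚ (ℚ ⊗[ℤ] P) = Module.finrank ℚ (MonoidAlgebra ℚ G) :=
        e.finrank_eq
      have hfin : Fintype G := Fintype.ofFinite G
      have h3 : Module.finrank ℚ (MonoidAlgebra ℚ G) = Nat.card G := by
        rw [show Module.finrank ℚ (MonoidAlgebra ℚ G) = Module.finrank ℚ (G →₀ ℚ) from
            (MonoidAlgebra.coeffLinearEquiv ℚ).finrank_eq,
          Module.finrank_finsupp_self, Nat.card_eq_fintype_card]
      rw [← h1, h2, h3]
    -- rank-nullity for g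
    have hrn := LinearMap.lift_rank_eq_of_surjective hgsurj
    haveI hKfin : Module.Finite ℤ (LinearMap.ker g) :=
      Module.Finite.iff_fg.mpr (IsNoetherian.noetherian _)
    have hfr : Module.finrank ℤ P = 1 + Module.finrank ℤ (LinearMap.ker g) := by
      have hP := Module.finrank_eq_rank ℤ P
      have hK := Module.finrank_eq_rank ℤ (LinearMap.ker g)
      rw [← hP, ← hK, Module.rank_self] at hrn
      simp only [Cardinal.lift_natCast, Cardinal.lift_one] at hrn
      exact_mod_cast hrn
    -- identify J with ker g over ℤ
    have hJK : J.restrictScalars ℤ = LinearMap.ker g := by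
      ext p
      rw [Submodule.restrictScalars_mem, hJmem, LinearMap.mem_ker]
    have hJfr : Module.finrank ℤ J = Module.finrank ℤ (LinearMap.ker g) := by
      have eqv : (J.restrictScalars ℤ) ≃ₗ[ℤ] J :=
        (Submodule.restrictScalarsEquiv ℤ (MonoidAlgebra ℤ G) P J).restrictScalars ℤ
      rw [← eqv.finrank_eq, hJK]
    rw [hJfr]
    omega
end

section
/- Let G be a finite group and X a finite CW-complex with fundamental group G whose cellular chain complex of the universal cover C_*(X̃) satisfies H_3(X̃) = 0 and H^3(X̃; M) = 0 for all finitely generated Z[G]-modules M (so Tors H_2(X̃) = 0). Then the quotient module C_2(X̃)/im(∂_3) is a torsion-free abelian group, and the short exact sequence 0 → C_3(X̃) → C_2(X̃) → C_2(X̃)/im(∂_3) → 0 splits, so C_2(X̃)/im(∂_3) is a stably free Z[G]-module. -/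
open MonoidAlgebra

/-- Averaged (coinduction-style) retraction: from a `ℤ`-linear map build a `G`-equivariant
additive map. -/
noncomputable def avgRetAdd {G : Type*} [Group G] [Finite G] {a b : ℕ}
    (r0 : (Fin b → MonoidAlgebra ℤ G) →ₗ[ℤ] (Fin a → MonoidAlgebra ℤ G)) :
    (Fin b → MonoidAlgebra ℤ G) →+ (Fin a → MonoidAlgebra ℤ G) where
  toFun x := fun i => MonoidAlgebra.ofCoeff (Finsupp.equivFunOnFinite.symm fun g =>
    (r0 (MonoidAlgebra.single g⁻¹ (1:ℤ) • x) i).coeff 1)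
  map_zero' := by
    funext i
    ext g
    simp
  map_add' x y := by
    funext i
    ext g
    simp only [smul_add, map_add, Pi.add_apply]
    exact Finsupp.add_apply _ _ _

/-- The averaged retraction is `ℤ[G]`-linear. -/
noncomputable def avgRet {G : Type*} [Group G] [Finite G] {a b : ℕ}
    (r0 : (Fin b → MonoidAlgebra ℤ G) →ₗ[ℤ] (Fin a → MonoidAlgebra ℤ G)) :
    (Fin b → MonoidAlgebra ℤ G) →ₗ[MonoidAlgebra ℤ G] (Fin a → MonoidAlgebra ℤ G) :=
  MonoidAlgebra.equivariantOfLinearOfComm (avgRetAdd r0).toIntLinearMap (by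
    intro g x
    funext i
    ext h
    show ((avgRetAdd r0) _ i).coeff h = _
    simp only [avgRetAdd, AddMonoidHom.coe_mk, ZeroHom.coe_mk, MonoidAlgebra.coeff_ofCoeff,
      Finsupp.coe_equivFunOnFinite_symm, Pi.smul_apply, smul_eq_mul,
      MonoidAlgebra.coeff_single_mul_apply, one_mul]
    rw [smul_smul, MonoidAlgebra.single_mul_single, one_mul]
    show _ = ((avgRetAdd r0) x i).coeff (g⁻¹ * h)
    simp only [avgRetAdd, AddMonoidHom.coe_mk, ZeroHom.coe_mk, MonoidAlgebra.coeff_ofCoeff,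
      Finsupp.coe_equivFunOnFinite_symm]
    rw [mul_inv_rev, inv_inv])

theorem avgRet_retraction {G : Type*} [Group G] [Finite G] {a b : ℕ}
    (d3 : (Fin a → MonoidAlgebra ℤ G) →ₗ[MonoidAlgebra ℤ G] (Fin b → MonoidAlgebra ℤ G))
    (r0 : (Fin b → MonoidAlgebra ℤ G) →ₗ[ℤ] (Fin a → MonoidAlgebra ℤ G))
    (hr0 : ∀ w, r0 (d3 w) = w) (w : Fin a → MonoidAlgebra ℤ G) :
    avgRet r0 (d3 w) = w := by
  funext i
  ext h
  show ((avgRetAdd r0) _ i).coeff h = _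
  simp only [avgRetAdd, AddMonoidHom.coe_mk, ZeroHom.coe_mk, MonoidAlgebra.coeff_ofCoeff,
    Finsupp.coe_equivFunOnFinite_symm]
  rw [← map_smul d3, hr0]
  simp [MonoidAlgebra.coeff_single_mul_apply]

/-- Algebraic form of the statement that a D2 complex has stably free second chain module:
let `G` be a finite group and `F_a →∂₃ F_b →∂₂ F_c` a chain complex of finitely generated
free `ℤ[G]`-modules with `∂₃` injective (`H₃ = 0`) and with `ker ∂₂ / im ∂₃` torsion-free
as an abelian group (`Tors H₂ = 0`). Then `J = F_b / im ∂₃` is torsion-free as an abelian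
group (a `ℤ[G]`-lattice), and the exact sequence `0 → F_a → F_b → J → 0` splits, i.e.
`J ⊕ F_a ≅ F_b`; in particular `J` is a stably free `ℤ[G]`-module. -/
theorem stmt_12 (G : Type*) [Group G] [Finite G] (a b c : ℕ)
    (d3 : (Fin a → MonoidAlgebra ℤ G) →ₗ[MonoidAlgebra ℤ G] (Fin b → MonoidAlgebra ℤ G))
    (d2 : (Fin b → MonoidAlgebra ℤ G) →ₗ[MonoidAlgebra ℤ G] (Fin c → MonoidAlgebra ℤ G))
    (hinj : Function.Injective d3)
    (hcomp : d2.comp d3 = 0)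
    (htf : ∀ x : LinearMap.ker d2 ⧸
        (LinearMap.range d3).comap (LinearMap.ker d2).subtype,
      ∀ k : ℤ, k ≠ 0 → k • x = 0 → x = 0) :
    (∀ x : (Fin b → MonoidAlgebra ℤ G) ⧸ LinearMap.range d3,
      ∀ k : ℤ, k ≠ 0 → k • x = 0 → x = 0) ∧
    Nonempty ((((Fin b → MonoidAlgebra ℤ G) ⧸ LinearMap.range d3) ×
        (Fin a → MonoidAlgebra ℤ G)) ≃ₗ[MonoidAlgebra ℤ G]
      (Fin b → MonoidAlgebra ℤ G)) := by
  haveI hnzc : NoZeroSMulDivisors ℤ (Fin c → MonoidAlgebra ℤ G) := by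
    constructor
    intro k y h
    by_cases hk : k = 0
    · exact Or.inl hk
    · refine Or.inr ?_
      funext i
      ext g
      have h1 := congrFun h i
      rw [Pi.smul_apply] at h1
      have h2 : k • (y i).coeff g = 0 := by
        rw [← Finsupp.smul_apply, ← MonoidAlgebra.coeff_smul, h1]; rfl
      rcases smul_eq_zero.mp h2 with h3 | h3
      · exact absurd h3 hk
      · simpa using h3
  -- Part 1: torsion-freeness of the quotient
  have tf : ∀ x : (Fin b → MonoidAlgebra ℤ G) ⧸ LinearMap.range d3,
      ∀ k : ℤ, k ≠ 0 → k • x = 0 → x = 0 := by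
    intro x k hk hkx
    obtain ⟨v, rfl⟩ := Submodule.Quotient.mk_surjective _ x
    have h1 : (Submodule.Quotient.mk (k • v) :
        (Fin b → MonoidAlgebra ℤ G) ⧸ LinearMap.range d3) = 0 := by
      rw [Submodule.Quotient.mk_smul]; exact hkx
    rw [Submodule.Quotient.mk_eq_zero] at h1
    obtain ⟨w, hw⟩ := h1
    have h2 : d2 v = 0 := by
      have hz : k • d2 v = 0 := by
        rw [← map_zsmul d2, ← hw]
        exact LinearMap.congr_fun hcomp w
      rcases smul_eq_zero.mp hz with h | h
      · exact absurd h hk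
      · exact h
    set y : LinearMap.ker d2 ⧸
        (LinearMap.range d3).comap (LinearMap.ker d2).subtype :=
      Submodule.Quotient.mk ⟨v, h2⟩ with hy
    have hky : k • y = 0 := by
      rw [hy, ← Submodule.Quotient.mk_smul, Submodule.Quotient.mk_eq_zero]
      show ((k • (⟨v, h2⟩ : LinearMap.ker d2)) : Fin b → MonoidAlgebra ℤ G)
        ∈ LinearMap.range d3
      show k • v ∈ _
      exact ⟨w, hw⟩
    have := htf y k hk hky
    rw [hy, Submodule.Quotient.mk_eq_zero] at this
    rw [Submodule.Quotient.mk_eq_zero]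
    exact this
  refine ⟨tf, ?_⟩
  -- Part 2: the splitting
  haveI : NoZeroSMulDivisors ℤ
      ((Fin b → MonoidAlgebra ℤ G) ⧸ LinearMap.range d3) := by
    constructor
    intro k x h
    by_cases hk : k = 0
    · exact Or.inl hk
    · exact Or.inr (tf x k hk h)
  haveI : Fintype G := Fintype.ofFinite G
  haveI : Module.Finite ℤ (MonoidAlgebra ℤ G) :=
    Module.Finite.equiv
      ((Finsupp.linearEquivFunOnFinite ℤ ℤ G).symm.trans (MonoidAlgebra.coeffLinearEquiv ℤ).symm :
        (G → ℤ) ≃ₗ[ℤ] MonoidAlgebra ℤ G)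
  haveI : Module.Finite ℤ (Fin b → MonoidAlgebra ℤ G) := inferInstance
  haveI hfin : Module.Finite ℤ
      ((Fin b → MonoidAlgebra ℤ G) ⧸ LinearMap.range d3) :=
    Module.Finite.of_surjective
      ((LinearMap.range d3).mkQ.toAddMonoidHom.toIntLinearMap)
      (Submodule.Quotient.mk_surjective _)
  haveI : Module.Free ℤ ((Fin b → MonoidAlgebra ℤ G) ⧸ LinearMap.range d3) :=
    Module.free_of_finite_type_torsion_free'
  -- a ℤ-linear section of the quotient map
  obtain ⟨s, hs⟩ := Module.projective_lifting_property
    ((LinearMap.range d3).mkQ.toAddMonoidHom.toIntLinearMap)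
    (LinearMap.id (R := ℤ)
      (M := (Fin b → MonoidAlgebra ℤ G) ⧸ LinearMap.range d3))
    (Submodule.Quotient.mk_surjective _)
  -- produce a ℤ-linear retraction of d3
  have hp : ∀ x : Fin b → MonoidAlgebra ℤ G,
      x - s ((LinearMap.range d3).mkQ x) ∈ LinearMap.range d3 := by
    intro x
    rw [← Submodule.Quotient.mk_eq_zero]
    have : (LinearMap.range d3).mkQ (x - s ((LinearMap.range d3).mkQ x)) = 0 := by
      rw [map_sub]
      have := LinearMap.congr_fun hs ((LinearMap.range d3).mkQ x)
      simp only [LinearMap.coe_comp, Function.comp_apply, LinearMap.id_apply,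
        AddMonoidHom.coe_toIntLinearMap, LinearMap.toAddMonoidHom_coe] at this
      rw [this, sub_self]
    exact this
  choose t ht using fun x => hp x
  have tadd : ∀ x y, t (x + y) = t x + t y := by
    intro x y
    apply hinj
    rw [map_add, ht, ht, ht, map_add, map_add]
    abel
  let r0 : (Fin b → MonoidAlgebra ℤ G) →ₗ[ℤ] (Fin a → MonoidAlgebra ℤ G) :=
    (AddMonoidHom.mk' t tadd).toIntLinearMap
  have hr0 : ∀ w, r0 (d3 w) = w := by
    intro w
    apply hinj
    show d3 (t (d3 w)) = d3 w
    rw [ht]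
    have h0 : ((LinearMap.range d3).mkQ (d3 w)) = 0 := by
      rw [Submodule.mkQ_apply]
      exact (Submodule.Quotient.mk_eq_zero _).mpr ⟨w, rfl⟩
    rw [h0, map_zero, sub_zero]
  -- equivariant retraction and the splitting isomorphism
  have hR : ∀ w, avgRet r0 (d3 w) = w := avgRet_retraction d3 r0 hr0
  let f : (Fin b → MonoidAlgebra ℤ G) →ₗ[MonoidAlgebra ℤ G]
      (((Fin b → MonoidAlgebra ℤ G) ⧸ LinearMap.range d3) ×
        (Fin a → MonoidAlgebra ℤ G)) :=
    ((LinearMap.range d3).mkQ).prod (avgRet r0)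
  have hbij : Function.Bijective f := by
    constructor
    · intro x y hxy
      have h1 : (LinearMap.range d3).mkQ (x - y) = 0 := by
        rw [map_sub]
        have := congrArg Prod.fst hxy
        simp only [f, LinearMap.prod_apply, Function.prod] at this
        rw [this, sub_self]
      rw [Submodule.mkQ_apply, Submodule.Quotient.mk_eq_zero] at h1
      obtain ⟨u, hu⟩ := h1
      have h2 : avgRet r0 (x - y) = 0 := by
        rw [map_sub]
        have := congrArg Prod.snd hxy
        simp only [f, LinearMap.prod_apply, Function.prod] at this
        rw [this, sub_self]
      rw [← hu, hR] at h2
      have : x - y = 0 := by rw [← hu, h2, map_zero]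
      exact sub_eq_zero.mp this
    · rintro ⟨j, w⟩
      obtain ⟨v, rfl⟩ := Submodule.Quotient.mk_surjective _ j
      refine ⟨v + d3 (w - avgRet r0 v), ?_⟩
      have h1 : (LinearMap.range d3).mkQ (v + d3 (w - avgRet r0 v)) =
          Submodule.Quotient.mk v := by
        rw [map_add]
        have hz : (LinearMap.range d3).mkQ (d3 (w - avgRet r0 v)) = 0 := by
          rw [Submodule.mkQ_apply]
          exact (Submodule.Quotient.mk_eq_zero _).mpr ⟨_, rfl⟩
        rw [hz, add_zero, Submodule.mkQ_apply]
      have h2 : avgRet r0 (v + d3 (w - avgRet r0 v)) = w := by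
        rw [map_add, hR]
        abel
      simp only [f, LinearMap.prod_apply, Pi.prod]
      exact Prod.ext h1 h2
  exact ⟨(LinearEquiv.ofBijective f hbij).symm⟩
end
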